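/- arXiv:1911.12972 — 4 statements merged into one kernel-verified Lean document; each statement's English description precedes it below -/
import Mathlib

section
/- For every positive integer n, every real α with 0 < α ≤ 1/n and every real x ≥ 0: U_n^[α](1; x) = 1, U_n^[α](t; x) = (1 + nx)/n, and U_n^[α](t²; x) = (2 + 4nx + n²x² + n²xα)/n². -/
open MeasureTheory Filter

noncomputable section

/-- The Szász basis function `e^(-nu) (nu)^i / i!`. -/
def szaszBasis (n i : ℕ) (u : ℝ) : ℝ :=
  Real.exp (-(n : ℝ) * u) * ((n : ℝ) * u) ^ i / (Nat.factorial i : ℝ)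

/-- The rising factorial `x^(i,-α) = ∏_{j=0}^{i-1} (x + jα)` with increment `α`. -/
def risingFac (x α : ℝ) (i : ℕ) : ℝ :=
  ∏ j ∈ Finset.range i, (x + (j : ℝ) * α)

/-- The Durrmeyer modification of the generalized Szász-Mirakjan operators:
`U_n^[α](f; x) = n Σ_i (1+nα)^(−x/α) (α+1/n)^(−i) x^(i,−α)/i! ∫_0^∞ e^(−nu)(nu)^i/i! f(u) du`. -/
def U (n : ℕ) (α : ℝ) (f : ℝ → ℝ) (x : ℝ) : ℝ :=
  (n : ℝ) * ∑' i : ℕ,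
    (1 + (n : ℝ) * α) ^ (-x / α) * (α + 1 / (n : ℝ)) ^ (-(i : ℤ)) *
      (risingFac x α i / (Nat.factorial i : ℝ)) *
      ∫ u in Set.Ioi (0 : ℝ), szaszBasis n i u * f u

/-- The `m`-th central moment `Θ_{n,m}^[α](x) = U_n^[α]((t−x)^m; x)`. -/
def theta (n : ℕ) (α : ℝ) (m : ℕ) (x : ℝ) : ℝ :=
  U n α (fun t => (t - x) ^ m) x

end

noncomputable section AuxProofs

open Set

def pa (a : ℝ) (i : ℕ) : ℝ := ∏ j ∈ Finset.range i, (a + j)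

lemma pa_zero (a : ℝ) : pa a 0 = 1 := rfl

lemma pa_succ (a : ℝ) (i : ℕ) : pa a (i + 1) = pa a i * (a + i) :=
  Finset.prod_range_succ _ _

lemma pa_succ' (a : ℝ) (i : ℕ) : pa a (i + 1) = a * pa (a + 1) i := by
  rw [pa, Finset.prod_range_succ']
  simp only [Nat.cast_zero, add_zero]
  rw [mul_comm]
  congr 1
  apply Finset.prod_congr rfl
  intro j _
  push_cast
  ring

lemma pa_nonneg {a : ℝ} (ha : 0 ≤ a) (i : ℕ) : 0 ≤ pa a i :=
  Finset.prod_nonneg fun j _ => by positivity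

lemma summable_pa {a : ℝ} (ha : 0 ≤ a) {s : ℝ} (hs0 : 0 ≤ s) (hs : s < 1) :
    Summable (fun i => pa a i * s ^ i / (Nat.factorial i : ℝ)) := by
  set r : ℝ := (s + 1) / 2 with hr
  have hsr : s < r := by rw [hr]; linarith
  have hr1 : r < 1 := by rw [hr]; linarith
  apply summable_of_ratio_norm_eventually_le hr1
  rw [Filter.eventually_atTop]
  refine ⟨⌈a * s / (r - s)⌉₊, fun i hi => ?_⟩
  have hkey : (a + i) * s ≤ r * (i + 1) := by
    have h1 : a * s / (r - s) ≤ (i : ℝ) := le_trans (Nat.le_ceil _) (by exact_mod_cast hi)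
    have h2 : a * s ≤ (r - s) * i := by
      rw [div_le_iff₀ (by linarith)] at h1; linarith [h1]
    nlinarith
  have hfi : (0:ℝ) < Nat.factorial i := by positivity
  have hterm : ∀ k : ℕ, ‖pa a k * s ^ k / (Nat.factorial k : ℝ)‖
      = pa a k * s ^ k / (Nat.factorial k : ℝ) := by
    intro k
    rw [Real.norm_eq_abs, abs_of_nonneg]
    have := pa_nonneg ha k
    positivity
  rw [hterm, hterm]
  have hfact : (Nat.factorial (i + 1) : ℝ) = ((i : ℝ) + 1) * Nat.factorial i := by
    push_cast [Nat.factorial_succ]; ring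
  rw [pa_succ, hfact, pow_succ]
  have heq : pa a i * (a + ↑i) * (s ^ i * s) / (((i:ℝ) + 1) * ↑(Nat.factorial i))
      = (pa a i * s ^ i / (Nat.factorial i : ℝ)) * ((a + i) * s / ((i:ℝ) + 1)) := by
    field_simp
  rw [heq]
  have hbound : (a + (i:ℝ)) * s / ((i:ℝ) + 1) ≤ r := by
    rw [div_le_iff₀ (by positivity)]
    linarith [hkey]
  calc pa a i * s ^ i / ↑(Nat.factorial i) * ((a + ↑i) * s / (↑i + 1))
      ≤ pa a i * s ^ i / ↑(Nat.factorial i) * r := by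
        apply mul_le_mul_of_nonneg_left hbound
        have := pa_nonneg ha i; positivity
    _ = r * (pa a i * s ^ i / ↑(Nat.factorial i)) := mul_comm _ _

lemma binom_tsum {a : ℝ} (ha : 0 ≤ a) {s : ℝ} (hs0 : 0 ≤ s) (hs : s < 1) :
    HasSum (fun i => pa a i * s ^ i / (Nat.factorial i : ℝ)) ((1 - s) ^ (-a) : ℝ) := by
  set r : ℝ := (s + 1) / 2 with hrdef
  have hsr : s < r := by rw [hrdef]; linarith
  have hr1 : r < 1 := by rw [hrdef]; linarith
  have hr0 : 0 < r := lt_of_le_of_lt hs0 hsr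
  set g : ℕ → ℝ → ℝ := fun i t => pa a i * t ^ i / (Nat.factorial i : ℝ) with hg
  set g' : ℕ → ℝ → ℝ := fun i t => pa a i * ((i : ℝ) * t ^ (i - 1)) / (Nat.factorial i : ℝ)
    with hg'
  set u : ℕ → ℝ := fun i => pa a i * ((i : ℝ) * r ^ (i - 1)) / (Nat.factorial i : ℝ) with hu
  have hu_succ : ∀ i : ℕ, u (i + 1) = a * (pa (a + 1) i * r ^ i / (Nat.factorial i : ℝ)) := by
    intro i
    rw [hu]
    simp only [Nat.add_sub_cancel]
    rw [pa_succ']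
    have hfact : (Nat.factorial (i + 1) : ℝ) = ((i : ℝ) + 1) * Nat.factorial i := by
      push_cast [Nat.factorial_succ]; ring
    rw [hfact]
    have hfi : (Nat.factorial i : ℝ) ≠ 0 := by positivity
    push_cast
    field_simp
  have hu_sum : Summable u := by
    rw [← summable_nat_add_iff 1]
    simp_rw [hu_succ]
    exact (summable_pa (by linarith) hr0.le hr1).mul_left a
  have hderiv : ∀ i : ℕ, ∀ t : ℝ, HasDerivAt (g i) (g' i t) t := by
    intro i t
    exact ((hasDerivAt_pow i t).const_mul (pa a i)).div_const _
  have hbound : ∀ i : ℕ, ∀ t ∈ Ioo (-r) r, ‖g' i t‖ ≤ u i := by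
    intro i t ht
    rw [hg', hu]
    simp only [Real.norm_eq_abs, abs_div, abs_mul, abs_pow]
    rw [abs_of_nonneg (pa_nonneg ha i), Nat.abs_cast, abs_of_nonneg (by positivity :
      (0:ℝ) ≤ (Nat.factorial i : ℝ))]
    have htr : |t| ≤ r := by
      rw [abs_le]; exact ⟨ht.1.le, ht.2.le⟩
    gcongr
    exact pa_nonneg ha i
  have hg0 : Summable (fun i => g i 0) := summable_pa ha le_rfl one_pos
  have hF : ∀ t ∈ Ioo (-r) r,
      HasDerivAt (fun z => ∑' i, g i z) (∑' i, g' i t) t := by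
    intro t ht
    exact hasDerivAt_tsum_of_isPreconnected hu_sum isOpen_Ioo (isPreconnected_Ioo)
      (fun i y hy => hderiv i y) hbound (by constructor <;> [linarith; exact hr0]) hg0 ht
  set F : ℝ → ℝ := fun z => ∑' i, g i z with hFdef
  have hsub : Icc (0:ℝ) s ⊆ Ioo (-r) r := fun t ht =>
    ⟨by linarith [ht.1], by linarith [ht.2]⟩
  have key : ∀ t ∈ Icc (0:ℝ) s, ∃ W : ℝ, F t = (1 - t) * W ∧ (∑' i, g' i t) = a * W := by
    intro t ht
    have ht0 : 0 ≤ t := ht.1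
    have ht1 : t < 1 := lt_of_le_of_lt ht.2 hs
    set q : ℕ → ℝ := fun i => pa (a + 1) i * t ^ i / (Nat.factorial i : ℝ) with hq
    have hq_sum : Summable q := summable_pa (by linarith) ht0 ht1
    set W : ℝ := ∑' i, q i with hW
    have hqW : HasSum q W := hq_sum.hasSum
    refine ⟨W, ?_, ?_⟩
    · set D : ℕ → ℝ := fun i => q i - g i t with hD
      have hD_shift : (fun i => D (i + 1)) = fun i => t * q i := by
        funext i
        show q (i + 1) - g (i + 1) t = t * q i
        simp only [hq, hg]
        rw [pa_succ (a + 1) i, pa_succ' a i]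
        have hfact : (Nat.factorial (i + 1) : ℝ) = ((i : ℝ) + 1) * Nat.factorial i := by
          push_cast [Nat.factorial_succ]; ring
        rw [hfact, pow_succ]
        have hfi : (Nat.factorial i : ℝ) ≠ 0 := by positivity
        field_simp
        ring
      have hD_hasSum : HasSum D (t * W) := by
        have h1 : HasSum (fun i => D (i + 1)) (t * W) := by
          rw [hD_shift]; exact hqW.mul_left t
        have h0 := (hasSum_nat_add_iff (f := D) 1).mp h1
        have hD0 : ∑ i ∈ Finset.range 1, D i = 0 := by
          simp [hD, hq, hg, pa_zero]
        rw [hD0, add_zero] at h0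
        exact h0
      have hsum2 : HasSum (fun i => q i - D i) (W - t * W) := hqW.sub hD_hasSum
      have heq : (fun i => q i - D i) = fun i => g i t := by
        funext i; rw [hD]; ring
      rw [heq] at hsum2
      rw [hFdef]
      simp only
      rw [hsum2.tsum_eq]; ring
    · have hshift : (fun i => g' (i + 1) t) = fun i => a * q i := by
        funext i
        rw [hg', hq]
        simp only [Nat.add_sub_cancel]
        rw [pa_succ']
        have hfact : (Nat.factorial (i + 1) : ℝ) = ((i : ℝ) + 1) * Nat.factorial i := by
          push_cast [Nat.factorial_succ]; ring
        rw [hfact]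
        have hfi : (Nat.factorial i : ℝ) ≠ 0 := by positivity
        push_cast
        field_simp
      have h1 : HasSum (fun i => g' (i + 1) t) (a * W) := by
        rw [hshift]; exact hqW.mul_left a
      have h2 : HasSum (fun i => g' i t) (a * W) := by
        have h0 := (hasSum_nat_add_iff (f := fun i => g' i t) 1).mp h1
        have hD0 : ∑ i ∈ Finset.range 1, g' i t = 0 := by
          simp [hg']
        rw [hD0, add_zero] at h0
        exact h0
      exact h2.tsum_eq
  set G : ℝ → ℝ := fun t => F t * (1 - t) ^ a with hGdef
  have hGderiv : ∀ t ∈ Icc (0:ℝ) s,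
      HasDerivAt G ((∑' i, g' i t) * (1 - t) ^ a + F t * ((-1) * a * (1 - t) ^ (a - 1))) t := by
    intro t ht
    have h1t : (0:ℝ) < 1 - t := by
      have := ht.2; linarith [lt_of_le_of_lt ht.2 hs]
    have hrp : HasDerivAt (fun z : ℝ => (1 - z) ^ a) ((-1) * a * (1 - t) ^ (a - 1)) t := by
      have hbase : HasDerivAt (fun z : ℝ => 1 - z) (-1) t := by
        simpa using (hasDerivAt_id t).const_sub 1
      exact hbase.rpow_const (Or.inl (ne_of_gt h1t))
    exact (hF t (hsub ht)).mul hrp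
  have hGzero : ∀ t ∈ Icc (0:ℝ) s,
      (∑' i, g' i t) * (1 - t) ^ a + F t * ((-1) * a * (1 - t) ^ (a - 1)) = 0 := by
    intro t ht
    obtain ⟨W, hFt, hF't⟩ := key t ht
    have h1t : (0:ℝ) < 1 - t := by linarith [lt_of_le_of_lt ht.2 hs]
    rw [hFt, hF't]
    have hpow : (1 - t) ^ a = (1 - t) ^ (a - 1) * (1 - t) := by
      rw [← Real.rpow_add_one (ne_of_gt h1t)]; ring_nf
    rw [hpow]; ring
  have hconst : G s = G 0 := by
    have hmvt := Convex.norm_image_sub_le_of_norm_hasDerivWithin_le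
      (f := G) (f' := fun t => (∑' i, g' i t) * (1 - t) ^ a +
        F t * ((-1) * a * (1 - t) ^ (a - 1))) (C := 0) (s := Icc (0:ℝ) s)
      (fun t ht => (hGderiv t ht).hasDerivWithinAt)
      (fun t ht => by
        show ‖(∑' i, g' i t) * (1 - t) ^ a + F t * ((-1) * a * (1 - t) ^ (a - 1))‖ ≤ 0
        rw [hGzero t ht]; simp)
      (convex_Icc 0 s) ⟨le_rfl, hs0⟩ ⟨hs0, le_rfl⟩
    simp only [zero_mul] at hmvt
    have := norm_le_zero_iff.mp hmvt
    linarith [sub_eq_zero.mp this]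
  have hF0 : F 0 = 1 := by
    rw [hFdef]
    simp only
    rw [tsum_eq_single 0 (by intro i hi; simp [hg, zero_pow hi])]
    simp [hg, pa_zero]
  have hG0 : G 0 = 1 := by
    rw [hGdef]; simp [hF0]
  have hGs : F s * (1 - s) ^ a = 1 := by
    have := hconst.trans hG0
    rwa [hGdef] at this
  have h1s : (0:ℝ) < 1 - s := by linarith
  have hFs : F s = (1 - s) ^ (-a) := by
    have hne : ((1:ℝ) - s) ^ a ≠ 0 := by positivity
    rw [Real.rpow_neg h1s.le]
    field_simp
    linarith [hGs]
  have hsum : Summable (fun i => g i s) := summable_pa ha hs0 hs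
  have hhs := hsum.hasSum
  rwa [show (∑' i, g i s) = F s from rfl, hFs] at hhs

lemma integral_pow_exp' (k : ℕ) {r : ℝ} (hr : 0 < r) :
    ∫ u in Ioi (0:ℝ), u ^ k * Real.exp (-(r * u)) = (Nat.factorial k : ℝ) / r ^ (k + 1) := by
  have h := Real.integral_rpow_mul_exp_neg_mul_Ioi (a := (k:ℝ)+1) (by positivity) hr
  rw [show ((k:ℝ)+1-1) = (k:ℝ) by ring] at h
  calc ∫ u in Ioi (0:ℝ), u ^ k * Real.exp (-(r * u))
      = ∫ u in Ioi (0:ℝ), u ^ ((k:ℝ)) * Real.exp (-(r * u)) := by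
        refine setIntegral_congr_fun measurableSet_Ioi (fun t ht => ?_)
        rw [Real.rpow_natCast]
    _ = (1/r) ^ ((k:ℝ)+1) * Real.Gamma ((k:ℝ)+1) := h
    _ = (Nat.factorial k : ℝ) / r ^ (k + 1) := by
        rw [Real.Gamma_nat_eq_factorial]
        rw [show ((k:ℝ)+1) = ((k+1:ℕ):ℝ) by push_cast; ring, Real.rpow_natCast]
        rw [one_div, inv_pow]
        field_simp

lemma szasz_int (n : ℕ) (hn : 0 < n) (i m : ℕ) :
    ∫ u in Ioi (0:ℝ), szaszBasis n i u * u ^ m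
      = (Nat.factorial (i + m) : ℝ) / (Nat.factorial i * (n:ℝ) ^ (m + 1)) := by
  have hn' : (0:ℝ) < n := by exact_mod_cast hn
  have hfi : (Nat.factorial i : ℝ) ≠ 0 := by positivity
  have heq : ∀ u : ℝ, szaszBasis n i u * u ^ m
      = ((n:ℝ) ^ i / Nat.factorial i) * (u ^ (i + m) * Real.exp (-((n:ℝ) * u))) := by
    intro u
    rw [szaszBasis, neg_mul, mul_pow, pow_add]
    ring
  simp_rw [heq]
  rw [MeasureTheory.integral_const_mul, integral_pow_exp' (i+m) hn']
  rw [show i + m + 1 = i + (m + 1) by ring, pow_add]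
  have hni : ((n:ℝ)) ^ i ≠ 0 := by positivity
  field_simp

end AuxProofs

theorem stmt2 (n : ℕ) (hn : 0 < n) (α : ℝ) (hα : 0 < α) (hαn : α ≤ 1 / n)
    (x : ℝ) (hx : 0 ≤ x) :
    U n α (fun _ => 1) x = 1 ∧
    U n α (fun t => t) x = (1 + n * x) / n ∧
    U n α (fun t => t ^ 2) x =
      (2 + 4 * n * x + n ^ 2 * x ^ 2 + n ^ 2 * x * α) / (n : ℝ) ^ 2 := by
  have hn' : (0:ℝ) < n := by exact_mod_cast hn
  set c : ℝ := 1 + (n:ℝ) * α with hc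
  have hc1 : 1 < c := by rw [hc]; nlinarith
  have hc0 : (0:ℝ) < c := by linarith
  set a : ℝ := x / α with hadef
  have ha : 0 ≤ a := by positivity
  set s : ℝ := (n:ℝ) * α / c with hsdef
  have hs0 : 0 ≤ s := by positivity
  have hs1 : s < 1 := by
    rw [hsdef, div_lt_one hc0, hc]; linarith
  have h1s : 1 - s = 1/c := by
    rw [hsdef, hc]; field_simp; ring
  have hzpow : ∀ i : ℕ, (α + 1/(n:ℝ)) ^ (-(i:ℤ)) = ((n:ℝ)/c) ^ i := by
    intro i
    have hcn : α + 1/(n:ℝ) = c/(n:ℝ) := by rw [hc]; field_simp; ring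
    rw [hcn, zpow_neg, zpow_natCast, ← inv_pow, inv_div]
  have hrf : ∀ i : ℕ, risingFac x α i = α ^ i * pa a i := by
    intro i
    rw [risingFac, pa]
    calc ∏ j ∈ Finset.range i, (x + (j:ℝ) * α)
        = ∏ j ∈ Finset.range i, (α * (a + (j:ℝ))) := by
          apply Finset.prod_congr rfl
          intro j _
          rw [hadef]
          field_simp
      _ = α ^ i * ∏ j ∈ Finset.range i, (a + (j:ℝ)) := by
          rw [Finset.prod_mul_distrib, Finset.prod_const, Finset.card_range]
  have hpow : ∀ i : ℕ, ((n:ℝ)/c) ^ i * (α ^ i * pa a i) = pa a i * s ^ i := by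
    intro i
    rw [← mul_assoc, ← mul_pow, hsdef, mul_comm]
    congr 2
    ring
  have H0 := binom_tsum ha hs0 hs1
  have H1 := binom_tsum (by positivity : (0:ℝ) ≤ a + 1) hs0 hs1
  have H2 := binom_tsum (by positivity : (0:ℝ) ≤ a + 2) hs0 hs1
  set V0 : ℝ := (1 - s) ^ (-a) with hV0def
  set V1 : ℝ := (1 - s) ^ (-(a+1)) with hV1def
  set V2 : ℝ := (1 - s) ^ (-(a+2)) with hV2def
  have hcV : ∀ k : ℕ, c ^ (-a) * ((1 - s) ^ (-(a + (k:ℝ))) : ℝ) = c ^ k := by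
    intro k
    rw [h1s, one_div, ← Real.rpow_neg_one c, ← Real.rpow_natCast c k,
      ← Real.rpow_mul hc0.le, ← Real.rpow_add hc0]
    congr 1
    ring
  have hcV0 : c ^ (-a) * V0 = 1 := by
    have h := hcV 0
    simp only [Nat.cast_zero, add_zero, pow_zero] at h
    rw [hV0def]; exact h
  have hcV1 : c ^ (-a) * V1 = c := by
    have h := hcV 1
    simp only [Nat.cast_one, pow_one] at h
    rw [hV1def]; exact h
  have hcV2 : c ^ (-a) * V2 = c ^ 2 := by
    have h := hcV 2
    simp only [Nat.cast_ofNat] at h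
    rw [hV2def]; exact h
  have HA : HasSum (fun i : ℕ => (i:ℝ) * (pa a i * s ^ i / (Nat.factorial i : ℝ)))
      (s * a * V1) := by
    have hsh : (fun i : ℕ => (((i+1 : ℕ)):ℝ) * (pa a (i+1) * s ^ (i+1) / (Nat.factorial (i+1) : ℝ)))
        = fun i : ℕ => (s * a) * (pa (a+1) i * s ^ i / (Nat.factorial i : ℝ)) := by
      funext i
      have hfi : (Nat.factorial i : ℝ) ≠ 0 := by positivity
      rw [pa_succ', show (Nat.factorial (i + 1) : ℝ) = ((i : ℝ) + 1) * Nat.factorial i from by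
        push_cast [Nat.factorial_succ]; ring, pow_succ]
      push_cast
      field_simp
    have h1 : HasSum (fun i : ℕ => (((i+1 : ℕ)):ℝ) *
        (pa a (i+1) * s ^ (i+1) / (Nat.factorial (i+1) : ℝ))) (s * a * V1) := by
      rw [hsh]; exact H1.mul_left (s * a)
    have h0 := (hasSum_nat_add_iff
      (f := fun i : ℕ => (i:ℝ) * (pa a i * s ^ i / (Nat.factorial i : ℝ))) 1).mp h1
    simpa using h0
  have HB : HasSum (fun i : ℕ => (i:ℝ) * ((i:ℝ) - 1) * (pa a i * s ^ i / (Nat.factorial i : ℝ)))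
      (s ^ 2 * (a * (a+1)) * V2) := by
    have hsh : (fun i : ℕ => (((i+2 : ℕ)):ℝ) * ((((i+2 : ℕ)):ℝ) - 1) *
          (pa a (i+2) * s ^ (i+2) / (Nat.factorial (i+2) : ℝ)))
        = fun i : ℕ => (s ^ 2 * (a * (a+1))) * (pa (a+2) i * s ^ i / (Nat.factorial i : ℝ)) := by
      funext i
      have hfi : (Nat.factorial i : ℝ) ≠ 0 := by positivity
      have hpa : pa a (i+2) = a * ((a+1) * pa (a+2) i) := by
        rw [show i + 2 = (i+1) + 1 from rfl, pa_succ' a (i+1), pa_succ' (a+1) i]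
        ring_nf
      have hfact : (Nat.factorial (i + 2) : ℝ)
          = ((i : ℝ) + 2) * (((i:ℝ) + 1) * Nat.factorial i) := by
        rw [show i + 2 = (i+1) + 1 from rfl]
        push_cast [Nat.factorial_succ]
        ring
      rw [hpa, hfact, show i + 2 = i + 1 + 1 from rfl, pow_succ, pow_succ]
      push_cast
      field_simp
      ring
    have h1 : HasSum (fun i : ℕ => (((i+2 : ℕ)):ℝ) * ((((i+2 : ℕ)):ℝ) - 1) *
        (pa a (i+2) * s ^ (i+2) / (Nat.factorial (i+2) : ℝ)))
        (s ^ 2 * (a * (a+1)) * V2) := by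
      rw [hsh]; exact H2.mul_left (s ^ 2 * (a * (a+1)))
    have h0 := (hasSum_nat_add_iff
      (f := fun i : ℕ => (i:ℝ) * ((i:ℝ) - 1) * (pa a i * s ^ i / (Nat.factorial i : ℝ))) 2).mp h1
    simpa [Finset.sum_range_succ] using h0
  have hterm : ∀ m i : ℕ,
      (1 + (n:ℝ) * α) ^ (-x / α) * (α + 1/(n:ℝ)) ^ (-(i:ℤ)) *
        (risingFac x α i / (Nat.factorial i : ℝ)) *
        ((Nat.factorial (i + m) : ℝ) / (Nat.factorial i * (n:ℝ) ^ (m + 1)))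
      = (c ^ (-a) / (n:ℝ) ^ (m+1)) *
          ((Nat.factorial (i + m) : ℝ) / (Nat.factorial i : ℝ) *
            (pa a i * s ^ i / (Nat.factorial i : ℝ))) := by
    intro m i
    rw [hzpow i, hrf i]
    have hxa : (1 + (n:ℝ) * α) ^ (-x / α) = c ^ (-a) := by
      rw [hc, hadef]
      congr 1
      ring
    rw [hxa]
    have hp := hpow i
    linear_combination (c ^ (-a) * ((Nat.factorial (i+m) : ℝ)) /
      ((Nat.factorial i : ℝ)^2 * (n:ℝ)^(m+1))) * hp
  refine ⟨?_, ?_, ?_⟩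
  · -- constant function
    simp only [U]
    have hTe : ∀ i : ℕ,
        (1 + (n:ℝ) * α) ^ (-x / α) * (α + 1/(n:ℝ)) ^ (-(i:ℤ)) *
          (risingFac x α i / (Nat.factorial i : ℝ)) *
          (∫ u in Set.Ioi (0:ℝ), szaszBasis n i u * 1)
        = (c ^ (-a) / (n:ℝ) ^ (0+1)) * (pa a i * s ^ i / (Nat.factorial i : ℝ)) := by
      intro i
      have hfi : (Nat.factorial i : ℝ) ≠ 0 := by positivity
      have hint : (∫ u in Set.Ioi (0:ℝ), szaszBasis n i u * 1)
          = (Nat.factorial (i + 0) : ℝ) / (Nat.factorial i * (n:ℝ) ^ (0 + 1)) := by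
        have hfe : (fun u : ℝ => szaszBasis n i u * (1:ℝ))
            = fun u : ℝ => szaszBasis n i u * u ^ 0 := by
          funext u; simp
        rw [hfe]
        exact szasz_int n hn i 0
      rw [hint, hterm 0 i]
      simp [div_self hfi]
    rw [tsum_congr hTe, (H0.mul_left (c ^ (-a) / (n:ℝ) ^ (0+1))).tsum_eq]
    have hfin : (n:ℝ) * (c ^ (-a) / (n:ℝ) ^ (0+1) * V0) = c ^ (-a) * V0 := by
      rw [pow_one]
      field_simp
    rw [hfin, hcV0]
  · -- identity function
    simp only [U]
    have hTe : ∀ i : ℕ,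
        (1 + (n:ℝ) * α) ^ (-x / α) * (α + 1/(n:ℝ)) ^ (-(i:ℤ)) *
          (risingFac x α i / (Nat.factorial i : ℝ)) *
          (∫ u in Set.Ioi (0:ℝ), szaszBasis n i u * u)
        = (c ^ (-a) / (n:ℝ) ^ (1+1)) *
            ((Nat.factorial (i+1) : ℝ) / (Nat.factorial i : ℝ) *
              (pa a i * s ^ i / (Nat.factorial i : ℝ))) := by
      intro i
      have hint : (∫ u in Set.Ioi (0:ℝ), szaszBasis n i u * u)
          = (Nat.factorial (i + 1) : ℝ) / (Nat.factorial i * (n:ℝ) ^ (1 + 1)) := by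
        have hfe : (fun u : ℝ => szaszBasis n i u * u)
            = fun u : ℝ => szaszBasis n i u * u ^ 1 := by
          funext u; simp
        rw [hfe]
        exact szasz_int n hn i 1
      rw [hint, hterm 1 i]
    have HS1 : HasSum (fun i : ℕ =>
        ((Nat.factorial (i+1) : ℝ) / (Nat.factorial i : ℝ)) *
          (pa a i * s ^ i / (Nat.factorial i : ℝ))) (V0 + s * a * V1) := by
      have heq : (fun i : ℕ =>
          ((Nat.factorial (i+1) : ℝ) / (Nat.factorial i : ℝ)) *
            (pa a i * s ^ i / (Nat.factorial i : ℝ)))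
          = fun i : ℕ => pa a i * s ^ i / (Nat.factorial i : ℝ)
              + (i:ℝ) * (pa a i * s ^ i / (Nat.factorial i : ℝ)) := by
        funext i
        have hfi : (Nat.factorial i : ℝ) ≠ 0 := by positivity
        rw [show (Nat.factorial (i + 1) : ℝ) = ((i : ℝ) + 1) * Nat.factorial i from by
          push_cast [Nat.factorial_succ]; ring]
        field_simp
        ring
      rw [heq]
      exact H0.add HA
    rw [tsum_congr hTe, (HS1.mul_left (c ^ (-a) / (n:ℝ) ^ (1+1))).tsum_eq]
    have hsac : s * a * c = (n:ℝ) * x := by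
      rw [hsdef, hadef]
      field_simp
    have expand : (n:ℝ) * (c ^ (-a) / (n:ℝ) ^ (1+1) * (V0 + s * a * V1))
        = (c ^ (-a) * V0 + s * a * (c ^ (-a) * V1)) / (n:ℝ) := by
      field_simp
    rw [expand, hcV0, hcV1, hsac]
  · -- square function
    simp only [U]
    have hTe : ∀ i : ℕ,
        (1 + (n:ℝ) * α) ^ (-x / α) * (α + 1/(n:ℝ)) ^ (-(i:ℤ)) *
          (risingFac x α i / (Nat.factorial i : ℝ)) *
          (∫ u in Set.Ioi (0:ℝ), szaszBasis n i u * u ^ 2)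
        = (c ^ (-a) / (n:ℝ) ^ (2+1)) *
            ((Nat.factorial (i+2) : ℝ) / (Nat.factorial i : ℝ) *
              (pa a i * s ^ i / (Nat.factorial i : ℝ))) := by
      intro i
      rw [szasz_int n hn i 2, hterm 2 i]
    have HS2 : HasSum (fun i : ℕ =>
        ((Nat.factorial (i+2) : ℝ) / (Nat.factorial i : ℝ)) *
          (pa a i * s ^ i / (Nat.factorial i : ℝ)))
        (s ^ 2 * (a * (a+1)) * V2 + (4 * (s * a * V1) + 2 * V0)) := by
      have heq : (fun i : ℕ =>
          ((Nat.factorial (i+2) : ℝ) / (Nat.factorial i : ℝ)) *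
            (pa a i * s ^ i / (Nat.factorial i : ℝ)))
          = fun i : ℕ => (i:ℝ) * ((i:ℝ) - 1) * (pa a i * s ^ i / (Nat.factorial i : ℝ))
              + (4 * ((i:ℝ) * (pa a i * s ^ i / (Nat.factorial i : ℝ)))
                + 2 * (pa a i * s ^ i / (Nat.factorial i : ℝ))) := by
        funext i
        have hfi : (Nat.factorial i : ℝ) ≠ 0 := by positivity
        rw [show (Nat.factorial (i + 2) : ℝ)
            = ((i : ℝ) + 2) * (((i:ℝ) + 1) * Nat.factorial i) from by
          rw [show i + 2 = (i+1) + 1 from rfl]; push_cast [Nat.factorial_succ]; ring]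
        field_simp
        ring
      rw [heq]
      exact HB.add ((HA.mul_left 4).add (H0.mul_left 2))
    rw [tsum_congr hTe, (HS2.mul_left (c ^ (-a) / (n:ℝ) ^ (2+1))).tsum_eq]
    have hsac : s * a * c = (n:ℝ) * x := by
      rw [hsdef, hadef]
      field_simp
    have hs2c : s ^ 2 * (a * (a+1)) * c ^ 2 = (n:ℝ)^2 * x^2 + (n:ℝ)^2 * x * α := by
      rw [hsdef, hadef]
      field_simp
    have expand : (n:ℝ) * (c ^ (-a) / (n:ℝ) ^ (2+1) *
          (s ^ 2 * (a * (a+1)) * V2 + (4 * (s * a * V1) + 2 * V0)))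
        = (s ^ 2 * (a * (a+1)) * (c ^ (-a) * V2)
            + (4 * (s * a * (c ^ (-a) * V1)) + 2 * (c ^ (-a) * V0))) / (n:ℝ) ^ 2 := by
      field_simp
    rw [expand, hcV0, hcV1, hcV2, hsac, hs2c]
    ring
end

section
/- For every positive integer n, every real α with 0 < α ≤ 1/n and every real x ≥ 0: U_n^[α](t³; x) = (6 + 18nx + 9n²x(x+α) + n³x(x² + 3xα + 2α²))/n³ and U_n^[α](t⁴; x) = (24 + 96nx + 72n²x(x+α) + 16n³x(x² + 3xα + 2α²) + n⁴x(x³ + 6x²α + 11xα² + 6α³))/n⁴. -/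
open MeasureTheory Filter

noncomputable def Cval (x α z : ℝ) (k : ℕ) : ℝ :=
  z ^ k * risingFac x α k * (1 - α * z) ^ (-(x + k * α) / α)

namespace Aux

lemma risingFac_zero (x α : ℝ) : risingFac x α 0 = 1 := by simp [risingFac]

lemma risingFac_succ (x α : ℝ) (i : ℕ) :
    risingFac x α (i + 1) = risingFac x α i * (x + i * α) := by
  simp [risingFac, Finset.prod_range_succ]

lemma risingFac_nonneg {x α : ℝ} (hx : 0 ≤ x) (hα : 0 ≤ α) (i : ℕ) :
    0 ≤ risingFac x α i :=
  Finset.prod_nonneg fun j _ => by positivity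

lemma risingFac_add (x α : ℝ) (j k : ℕ) :
    risingFac x α (j + k) = risingFac x α k * risingFac (x + k * α) α j := by
  rw [risingFac, risingFac, risingFac, add_comm j k, Finset.prod_range_add]
  congr 1
  refine Finset.prod_congr rfl fun i _ => ?_
  push_cast; ring

lemma integral_szasz (n : ℕ) (hn : 0 < n) (i m : ℕ) :
    ∫ u in Set.Ioi (0:ℝ), szaszBasis n i u * u ^ m
      = (Nat.factorial (i + m) : ℝ) / (Nat.factorial i * (n : ℝ) ^ (m + 1)) := by
  have hn' : (0:ℝ) < n := by exact_mod_cast hn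
  have hEq : ∀ u : ℝ, szaszBasis n i u * u ^ m
      = ((n : ℝ) ^ i / (Nat.factorial i : ℝ)) *
        (u ^ ((((i + m + 1 : ℕ)) : ℝ) - 1) * Real.exp (-((n : ℝ) * u))) := by
    intro u
    have : u ^ ((((i + m + 1 : ℕ)) : ℝ) - 1) = u ^ (i + m) := by
      have : (((i + m + 1 : ℕ)) : ℝ) - 1 = ((i + m : ℕ) : ℝ) := by push_cast; ring
      rw [this, Real.rpow_natCast]
    rw [this, szaszBasis]
    rw [mul_pow, pow_add]
    ring_nf
  simp_rw [hEq]
  rw [MeasureTheory.integral_const_mul,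
    Real.integral_rpow_mul_exp_neg_mul_Ioi (by positivity) hn']
  rw [Real.rpow_natCast]
  rw [show (((i + m + 1 : ℕ) : ℝ)) = ((i + m : ℕ) : ℝ) + 1 by push_cast; ring,
    Real.Gamma_nat_eq_factorial]
  have hfi : (Nat.factorial i : ℝ) ≠ 0 := by positivity
  have hn0 : (n : ℝ) ≠ 0 := hn'.ne'
  field_simp
  rw [one_div_pow, show i + m + 1 = i + (m + 1) by ring, pow_add]
  field_simp


lemma summable_base {x α z : ℝ} (hx : 0 ≤ x) (hα : 0 < α) (hz : 0 ≤ z) (h1 : α * z < 1) :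
    Summable (fun i : ℕ => risingFac x α i / (Nat.factorial i : ℝ) * z ^ i) := by
  set ρ : ℝ := (α * z + 1) / 2 with hρ
  have hρ1 : ρ < 1 := by rw [hρ]; linarith
  have hρ2 : α * z < ρ := by rw [hρ]; linarith
  apply summable_of_ratio_norm_eventually_le hρ1
  obtain ⟨N, hN⟩ := exists_nat_ge (x * z / (ρ - α * z))
  filter_upwards [Filter.eventually_ge_atTop N] with i hi
  have hiN : (N : ℝ) ≤ i := by exact_mod_cast hi
  have hxz : x * z ≤ (i : ℝ) * (ρ - α * z) := by
    have : x * z ≤ (N : ℝ) * (ρ - α * z) := by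
      rw [div_le_iff₀ (by linarith)] at hN; linarith [hN]
    nlinarith [sub_nonneg.mpr hiN, sub_pos.mpr hρ2]
  have key : (x + i * α) * z ≤ ρ * ((i : ℝ) + 1) := by nlinarith
  have ha : 0 ≤ risingFac x α i := risingFac_nonneg hx hα.le i
  have ha' : 0 ≤ risingFac x α (i+1) := risingFac_nonneg hx hα.le (i+1)
  have hfi : (0:ℝ) < (Nat.factorial i : ℝ) := by positivity
  have hzp : 0 ≤ z ^ i := by positivity
  rw [Real.norm_of_nonneg (by positivity), Real.norm_of_nonneg (by positivity),
    risingFac_succ, pow_succ, Nat.factorial_succ]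
  push_cast
  rw [div_mul_eq_mul_div, div_le_iff₀ (by positivity)]
  have e2 : ρ * (risingFac x α i / ↑(Nat.factorial i) * z ^ i) * ((↑i + 1) * ↑(Nat.factorial i))
      = risingFac x α i * z ^ i * (ρ * ((i:ℝ) + 1)) := by field_simp
  rw [e2]
  have h3 := mul_le_mul_of_nonneg_left key (mul_nonneg ha hzp)
  nlinarith [h3]


lemma hasSum_base (hx : 0 ≤ x) (hα : 0 < α) (hz : 0 ≤ z) (h1 : α * z < 1) :
    HasSum (fun i : ℕ => risingFac x α i / (Nat.factorial i : ℝ) * z ^ i)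
      ((1 - α * z) ^ (-x / α)) := by
  have hzα : z < 1 / α := by rw [lt_div_iff₀ hα]; linarith [mul_comm α z]
  set r : ℝ := (z + 1 / α) / 2 with hr
  have hzr : z < r := by rw [hr]; linarith
  have hr1 : r < 1 / α := by rw [hr]; linarith
  have hr0 : 0 < r := lt_of_le_of_lt hz hzr
  have hαr : α * r < 1 := by
    rw [← lt_div_iff₀' hα]; exact hr1
  set t : Set ℝ := Set.Ioo (-r) r with ht
  set a : ℕ → ℝ := fun i => risingFac x α i / (Nat.factorial i : ℝ) with haf
  set g : ℕ → ℝ → ℝ := fun i y => a i * y ^ i with hgf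
  set g' : ℕ → ℝ → ℝ := fun i y => a i * (i * y ^ (i - 1)) with hg'f
  set u : ℕ → ℝ := fun i => a i * (i * r ^ (i - 1)) with huf
  have ha_nonneg : ∀ i, 0 ≤ a i := fun i => by
    have := risingFac_nonneg hx hα.le i
    rw [haf]; positivity
  -- summability of the derivative bounds
  have hu : Summable u := by
    rw [← summable_nat_add_iff 1]
    have hb := (summable_base (x := x + α) (z := r) (by linarith) hα hr0.le hαr).mul_left x
    refine hb.congr fun j => ?_
    rw [huf, haf]
    simp only [Nat.add_sub_cancel, Nat.factorial_succ]
    have : risingFac x α (j + 1) = x * risingFac (x + α) α j := by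
      have := risingFac_add x α j 1
      rw [this, risingFac_succ, risingFac_zero]
      push_cast; ring
    rw [this]
    have hfj : (Nat.factorial j : ℝ) ≠ 0 := by positivity
    push_cast
    field_simp
  -- derivatives
  have hg : ∀ (i : ℕ) (y : ℝ), HasDerivAt (g i) (g' i y) y := fun i y =>
    (hasDerivAt_pow i y).const_mul (a i)
  have hg' : ∀ (i : ℕ) (y : ℝ), y ∈ t → ‖g' i y‖ ≤ u i := by
    intro i y hy
    rw [hg'f, huf]
    simp only
    rw [norm_mul, norm_mul, Real.norm_of_nonneg (ha_nonneg i), Real.norm_natCast,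
      norm_pow, Real.norm_eq_abs]
    have hyr : |y| ≤ r := by
      rw [abs_le]; exact ⟨hy.1.le, hy.2.le⟩
    have hple : |y| ^ (i - 1) ≤ r ^ (i - 1) := pow_le_pow_left₀ (abs_nonneg y) hyr _
    exact mul_le_mul_of_nonneg_left
      (mul_le_mul_of_nonneg_left hple (Nat.cast_nonneg i)) (ha_nonneg i)
  have hg0 : Summable fun i => g i 0 := by
    apply summable_of_ne_finset_zero (s := {0})
    intro i hi
    simp only [Finset.mem_singleton] at hi
    rw [hgf]
    simp [zero_pow hi]
  -- term-by-term differentiation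
  have hF : ∀ y ∈ t, HasDerivAt (fun w => ∑' i, g i w) (∑' i, g' i y) y := by
    intro y hy
    exact hasDerivAt_tsum_of_isPreconnected hu isOpen_Ioo (convex_Ioo _ _).isPreconnected
      (fun i w _ => hg i w) (fun i w hw => hg' i w hw)
      (Set.mem_Ioo.mpr ⟨by linarith, hr0⟩) hg0 hy
  -- the ODE relation on [0, z]
  set F : ℝ → ℝ := fun w => ∑' i, g i w with hFf
  set D : ℝ → ℝ := fun w => ∑' i, g' i w with hDf
  have hzt : Set.Icc (0:ℝ) z ⊆ t := fun y hy => ⟨by linarith [hy.1], by linarith [hy.2]⟩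
  have hode : ∀ y ∈ Set.Icc (0:ℝ) z, D y * (1 - α * y) = x * F y := by
    intro y hy
    have hyt := hzt hy
    have hgs : Summable fun i => g' i y :=
      Summable.of_norm_bounded hu (fun i => hg' i y hyt)
    have hfs : Summable fun i => g i y := by
      have hαy : α * y < 1 :=
        lt_of_le_of_lt (mul_le_mul_of_nonneg_left hy.2 hα.le) h1
      have hsb := summable_base hx hα hy.1 hαy
      simpa only [hgf, haf] using hsb
    have hD : HasSum (fun i => g' i y) (D y) := hgs.hasSum
    have hFs : HasSum (fun i => g i y) (F y) := hfs.hasSum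
    have h0 : g' 0 y = 0 := by simp [hg'f]
    have hshift : HasSum (fun j => g' (j + 1) y) (D y) := by
      refine (hasSum_nat_add_iff (f := fun i => g' i y) 1).mpr ?_
      simpa [Finset.sum_range_one, h0] using hD
    have hfe : ∀ j : ℕ, g' (j + 1) y = x * g j y + (α * y) * g' j y := by
      intro j
      rw [hg'f, hgf, haf]
      simp only [Nat.add_sub_cancel, Nat.factorial_succ]
      rw [risingFac_succ]
      have hfj : (Nat.factorial j : ℝ) ≠ 0 := by positivity
      cases j with
      | zero => push_cast; simp [risingFac_zero]
      | succ k =>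
        simp only [Nat.add_sub_cancel]
        push_cast
        field_simp
        ring
    have hcomb : HasSum (fun j => g' (j + 1) y) (x * F y + (α * y) * D y) := by
      have h1s := hFs.mul_left x
      have h2s := hD.mul_left (α * y)
      simpa only [← hfe] using h1s.add h2s
    have huniq := hshift.unique hcomb
    linear_combination huniq
  -- the auxiliary function G is constant
  set G : ℝ → ℝ := fun y => F y * (1 - α * y) ^ (x / α) with hGf
  have hGd : ∀ y ∈ Set.Icc (0:ℝ) z, HasDerivAt G 0 y := by
    intro y hy
    have hyt := hzt hy
    have h1y : 0 < 1 - α * y := by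
      have : α * y ≤ α * z := mul_le_mul_of_nonneg_left hy.2 hα.le
      linarith
    have hinner : HasDerivAt (fun w => 1 - α * w) (-α) y := by
      simpa using ((hasDerivAt_id y).const_mul α).const_sub 1
    have hrpow : HasDerivAt (fun w => (1 - α * w) ^ (x / α))
        ((x / α) * (1 - α * y) ^ (x / α - 1) * (-α)) y :=
      by have := (Real.hasDerivAt_rpow_const (x := 1 - α * y) (p := x / α) (Or.inl h1y.ne')).comp y hinner; exact this
    have hFd := hF y hyt
    have hmul := hFd.mul hrpow
    have hmul' : HasDerivAt G _ y := hmul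
    convert hmul' using 1
    have hsplit : (1 - α * y) ^ (x / α) = (1 - α * y) ^ (x / α - 1) * (1 - α * y) := by
      rw [← Real.rpow_add_one h1y.ne']; ring_nf
    have hode' := hode y hy
    have hxα : x / α * (1 - α * y) ^ (x / α - 1) * (-α)
        = -x * (1 - α * y) ^ (x / α - 1) := by
      field_simp
    rw [hsplit, hxα]
    linear_combination (-(1 - α * y) ^ (x / α - 1)) * hode'
  have hconst := constant_of_has_deriv_right_zero (f := G) (a := 0) (b := z)
      (fun y hy => (hGd y hy).continuousAt.continuousWithinAt)
      (fun y hy => (hGd y (Set.mem_Icc.mpr ⟨hy.1, hy.2.le⟩)).hasDerivWithinAt)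
  have hGz : G z = G 0 := hconst z (Set.mem_Icc.mpr ⟨hz, le_refl z⟩)
  have hF0 : F 0 = 1 := by
    have hs : HasSum (fun i => g i 0) 1 := by
      have he : (fun i => g i 0) = fun i => if i = 0 then 1 else 0 := by
        funext i
        cases i with
        | zero => simp [hgf, haf, risingFac_zero]
        | succ k => simp [hgf, zero_pow]
      rw [he]; exact hasSum_ite_eq 0 1
    exact hs.tsum_eq
  have hG0 : G 0 = 1 := by rw [hGf]; simp [hF0]
  have h1z : 0 < 1 - α * z := by linarith [mul_comm α z]
  have hFz : F z * (1 - α * z) ^ (x / α) = 1 := by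
    have : G z = 1 := hGz.trans hG0
    simpa [hGf] using this
  have hsum := (summable_base hx hα hz h1).hasSum
  have hFzdef : F z = ∑' i, risingFac x α i / (Nat.factorial i : ℝ) * z ^ i := by
    simp only [hFf, hgf, haf]
  have hFz' : F z = (1 - α * z) ^ (-x / α) := by
    have hR : (0:ℝ) < (1 - α * z) ^ (x / α) := Real.rpow_pos_of_pos h1z _
    rw [neg_div, Real.rpow_neg h1z.le]
    field_simp
    linarith [hFz]
  rw [← hFz', hFzdef]
  exact hsum

lemma hasSum_desc {x α z : ℝ} (hx : 0 ≤ x) (hα : 0 < α) (hz : 0 ≤ z) (h1 : α * z < 1)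
    (k : ℕ) :
    HasSum (fun i : ℕ => risingFac x α i / (Nat.factorial i : ℝ) *
        (Nat.descFactorial i k : ℝ) * z ^ i) (Cval x α z k) := by
  have hxk : (0:ℝ) ≤ x + k * α := by positivity
  have base := (hasSum_base (x := x + k * α) hxk hα hz h1).mul_left (z ^ k * risingFac x α k)
  have hfe : ∀ j : ℕ, z ^ k * risingFac x α k *
      (risingFac (x + k * α) α j / (Nat.factorial j : ℝ) * z ^ j)
      = risingFac x α (j + k) / (Nat.factorial (j + k) : ℝ) *
        (Nat.descFactorial (j + k) k : ℝ) * z ^ (j + k) := by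
    intro j
    have hd : (Nat.factorial j : ℝ) * (Nat.descFactorial (j + k) k : ℝ)
        = (Nat.factorial (j + k) : ℝ) := by
      have := Nat.factorial_mul_descFactorial (n := j + k) (k := k) (Nat.le_add_left k j)
      have h2 : j + k - k = j := by omega
      rw [h2] at this
      exact_mod_cast this
    rw [risingFac_add, pow_add]
    have hfj : (Nat.factorial j : ℝ) ≠ 0 := by positivity
    have hfjk : (Nat.factorial (j + k) : ℝ) ≠ 0 := by positivity
    field_simp
    rw [← hd]
    ring
  rw [funext hfe] at base
  have := (hasSum_nat_add_iff
    (f := fun i => risingFac x α i / (Nat.factorial i : ℝ) *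
      (Nat.descFactorial i k : ℝ) * z ^ i) k).mp base
  have hzero : ∑ i ∈ Finset.range k, risingFac x α i / (Nat.factorial i : ℝ) *
      (Nat.descFactorial i k : ℝ) * z ^ i = 0 := by
    apply Finset.sum_eq_zero
    intro i hi
    rw [Finset.mem_range] at hi
    rw [Nat.descFactorial_eq_zero_iff_lt.mpr hi]
    simp
  rwa [hzero, add_zero] at this

lemma cast_desc_one (i : ℕ) : (Nat.descFactorial i 1 : ℝ) = (i : ℝ) := by
  simp [Nat.descFactorial]

lemma cast_desc_two (i : ℕ) : (Nat.descFactorial i 2 : ℝ) = (i : ℝ) * ((i : ℝ) - 1) := by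
  match i with
  | 0 => simp
  | (j+1) => simp [Nat.descFactorial]; push_cast; ring

lemma cast_desc_three (i : ℕ) :
    (Nat.descFactorial i 3 : ℝ) = (i : ℝ) * ((i : ℝ) - 1) * ((i : ℝ) - 2) := by
  match i with
  | 0 => simp
  | 1 => simp [Nat.descFactorial]
  | (j+2) => simp [Nat.descFactorial]; push_cast; ring

lemma cast_desc_four (i : ℕ) :
    (Nat.descFactorial i 4 : ℝ) = (i : ℝ) * ((i : ℝ) - 1) * ((i : ℝ) - 2) * ((i : ℝ) - 3) := by
  match i with
  | 0 => simp
  | 1 => simp [Nat.descFactorial]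
  | 2 => simp [Nat.descFactorial]
  | (j+3) => simp [Nat.descFactorial]; push_cast; ring


lemma U_pow_eq (n : ℕ) (hn : 0 < n) (α x : ℝ) (hα : 0 < α) (m : ℕ) :
    U n α (fun t => t ^ m) x
      = (1 + (n:ℝ) * α) ^ (-x / α) / (n:ℝ) ^ m *
        ∑' i : ℕ, risingFac x α i / (Nat.factorial i : ℝ) *
          ((Nat.factorial (i + m) : ℝ) / (Nat.factorial i : ℝ)) *
          ((n:ℝ) / (1 + (n:ℝ) * α)) ^ i := by
  have hn' : (0:ℝ) < n := by exact_mod_cast hn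
  have hc : (0:ℝ) < 1 + (n:ℝ) * α := by positivity
  rw [U]
  have hterm : ∀ i : ℕ,
      (1 + (n:ℝ) * α) ^ (-x / α) * (α + 1 / (n:ℝ)) ^ (-(i : ℤ)) *
        (risingFac x α i / (Nat.factorial i : ℝ)) *
        ∫ u in Set.Ioi (0:ℝ), szaszBasis n i u * (fun t => t ^ m) u
      = ((1 + (n:ℝ) * α) ^ (-x / α) / (n:ℝ) ^ (m + 1)) *
        (risingFac x α i / (Nat.factorial i : ℝ) *
          ((Nat.factorial (i + m) : ℝ) / (Nat.factorial i : ℝ)) *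
          ((n:ℝ) / (1 + (n:ℝ) * α)) ^ i) := by
    intro i
    have hint : (∫ u in Set.Ioi (0:ℝ), szaszBasis n i u * (fun t => t ^ m) u)
        = (Nat.factorial (i + m) : ℝ) / (Nat.factorial i * (n : ℝ) ^ (m + 1)) := by
      simpa using integral_szasz n hn i m
    rw [hint]
    have hz : (α + 1 / (n:ℝ)) ^ (-(i : ℤ)) = ((n:ℝ) / (1 + (n:ℝ) * α)) ^ i := by
      have he : α + 1 / (n:ℝ) = (1 + (n:ℝ) * α) / n := by field_simp; ring
      rw [he, zpow_neg, zpow_natCast, ← inv_pow, inv_div]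
    rw [hz]
    have hfi : (Nat.factorial i : ℝ) ≠ 0 := by positivity
    field_simp
  rw [tsum_congr hterm, tsum_mul_left]
  have hrp : (0:ℝ) ≤ (1 + (n:ℝ) * α) ^ (-x / α) := Real.rpow_nonneg hc.le _
  field_simp
  ring

lemma fact3 (i : ℕ) : (Nat.factorial (i + 3) : ℝ)
    = ((i:ℝ) + 1) * ((i:ℝ) + 2) * ((i:ℝ) + 3) * (Nat.factorial i : ℝ) := by
  rw [show i + 3 = (i + 2) + 1 from rfl, Nat.factorial_succ,
    show i + 2 = (i + 1) + 1 from rfl, Nat.factorial_succ, Nat.factorial_succ]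
  push_cast; ring

lemma fact4 (i : ℕ) : (Nat.factorial (i + 4) : ℝ)
    = ((i:ℝ) + 1) * ((i:ℝ) + 2) * ((i:ℝ) + 3) * ((i:ℝ) + 4) * (Nat.factorial i : ℝ) := by
  rw [show i + 4 = (i + 3) + 1 from rfl, Nat.factorial_succ, Nat.cast_mul, fact3]
  push_cast; ring

lemma moment3 {x α z : ℝ} (hx : 0 ≤ x) (hα : 0 < α) (hz : 0 ≤ z) (h1 : α * z < 1) :
    ∑' i : ℕ, risingFac x α i / (Nat.factorial i : ℝ) *
        ((Nat.factorial (i + 3) : ℝ) / (Nat.factorial i : ℝ)) * z ^ i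
      = 6 * Cval x α z 0 + 18 * Cval x α z 1 + 9 * Cval x α z 2 + Cval x α z 3 := by
  have h0 := (hasSum_desc hx hα hz h1 0).mul_left 6
  have h1' := (hasSum_desc hx hα hz h1 1).mul_left 18
  have h2 := (hasSum_desc hx hα hz h1 2).mul_left 9
  have h3 := hasSum_desc hx hα hz h1 3
  have hcomb := ((h0.add h1').add h2).add h3
  have hfe : ∀ i : ℕ,
      (6 * (risingFac x α i / (Nat.factorial i : ℝ) * (Nat.descFactorial i 0 : ℝ) * z ^ i)
        + 18 * (risingFac x α i / (Nat.factorial i : ℝ) * (Nat.descFactorial i 1 : ℝ) * z ^ i)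
        + 9 * (risingFac x α i / (Nat.factorial i : ℝ) * (Nat.descFactorial i 2 : ℝ) * z ^ i))
        + risingFac x α i / (Nat.factorial i : ℝ) * (Nat.descFactorial i 3 : ℝ) * z ^ i
      = risingFac x α i / (Nat.factorial i : ℝ) *
          ((Nat.factorial (i + 3) : ℝ) / (Nat.factorial i : ℝ)) * z ^ i := by
    intro i
    have hfi : (Nat.factorial i : ℝ) ≠ 0 := by positivity
    rw [Nat.descFactorial_zero, cast_desc_one, cast_desc_two, cast_desc_three, fact3,
      Nat.cast_one]
    field_simp
    ring
  rw [show (fun i : ℕ =>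
      (6 * (risingFac x α i / (Nat.factorial i : ℝ) * (Nat.descFactorial i 0 : ℝ) * z ^ i)
        + 18 * (risingFac x α i / (Nat.factorial i : ℝ) * (Nat.descFactorial i 1 : ℝ) * z ^ i)
        + 9 * (risingFac x α i / (Nat.factorial i : ℝ) * (Nat.descFactorial i 2 : ℝ) * z ^ i))
        + risingFac x α i / (Nat.factorial i : ℝ) * (Nat.descFactorial i 3 : ℝ) * z ^ i)
      = fun i : ℕ => risingFac x α i / (Nat.factorial i : ℝ) *
          ((Nat.factorial (i + 3) : ℝ) / (Nat.factorial i : ℝ)) * z ^ i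
      from funext hfe] at hcomb
  exact hcomb.tsum_eq

lemma moment4 {x α z : ℝ} (hx : 0 ≤ x) (hα : 0 < α) (hz : 0 ≤ z) (h1 : α * z < 1) :
    ∑' i : ℕ, risingFac x α i / (Nat.factorial i : ℝ) *
        ((Nat.factorial (i + 4) : ℝ) / (Nat.factorial i : ℝ)) * z ^ i
      = 24 * Cval x α z 0 + 96 * Cval x α z 1 + 72 * Cval x α z 2 + 16 * Cval x α z 3
        + Cval x α z 4 := by
  have h0 := (hasSum_desc hx hα hz h1 0).mul_left 24
  have h1' := (hasSum_desc hx hα hz h1 1).mul_left 96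
  have h2 := (hasSum_desc hx hα hz h1 2).mul_left 72
  have h3 := (hasSum_desc hx hα hz h1 3).mul_left 16
  have h4 := hasSum_desc hx hα hz h1 4
  have hcomb := (((h0.add h1').add h2).add h3).add h4
  have hfe : ∀ i : ℕ,
      ((24 * (risingFac x α i / (Nat.factorial i : ℝ) * (Nat.descFactorial i 0 : ℝ) * z ^ i)
        + 96 * (risingFac x α i / (Nat.factorial i : ℝ) * (Nat.descFactorial i 1 : ℝ) * z ^ i)
        + 72 * (risingFac x α i / (Nat.factorial i : ℝ) * (Nat.descFactorial i 2 : ℝ) * z ^ i))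
        + 16 * (risingFac x α i / (Nat.factorial i : ℝ) * (Nat.descFactorial i 3 : ℝ) * z ^ i))
        + risingFac x α i / (Nat.factorial i : ℝ) * (Nat.descFactorial i 4 : ℝ) * z ^ i
      = risingFac x α i / (Nat.factorial i : ℝ) *
          ((Nat.factorial (i + 4) : ℝ) / (Nat.factorial i : ℝ)) * z ^ i := by
    intro i
    have hfi : (Nat.factorial i : ℝ) ≠ 0 := by positivity
    rw [Nat.descFactorial_zero, cast_desc_one, cast_desc_two, cast_desc_three, cast_desc_four,
      fact4, Nat.cast_one]
    field_simp
    ring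
  rw [show (fun i : ℕ =>
      ((24 * (risingFac x α i / (Nat.factorial i : ℝ) * (Nat.descFactorial i 0 : ℝ) * z ^ i)
        + 96 * (risingFac x α i / (Nat.factorial i : ℝ) * (Nat.descFactorial i 1 : ℝ) * z ^ i)
        + 72 * (risingFac x α i / (Nat.factorial i : ℝ) * (Nat.descFactorial i 2 : ℝ) * z ^ i))
        + 16 * (risingFac x α i / (Nat.factorial i : ℝ) * (Nat.descFactorial i 3 : ℝ) * z ^ i))
        + risingFac x α i / (Nat.factorial i : ℝ) * (Nat.descFactorial i 4 : ℝ) * z ^ i)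
      = fun i : ℕ => risingFac x α i / (Nat.factorial i : ℝ) *
          ((Nat.factorial (i + 4) : ℝ) / (Nat.factorial i : ℝ)) * z ^ i
      from funext hfe] at hcomb
  exact hcomb.tsum_eq


end Aux

theorem stmt3 (n : ℕ) (hn : 0 < n) (α : ℝ) (hα : 0 < α) (hαn : α ≤ 1 / n)
    (x : ℝ) (hx : 0 ≤ x) :
    U n α (fun t => t ^ 3) x =
      (6 + 18 * n * x + 9 * n ^ 2 * x * (x + α) +
        n ^ 3 * x * (x ^ 2 + 3 * x * α + 2 * α ^ 2)) / (n : ℝ) ^ 3 ∧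
    U n α (fun t => t ^ 4) x =
      (24 + 96 * n * x + 72 * n ^ 2 * x * (x + α) +
        16 * n ^ 3 * x * (x ^ 2 + 3 * x * α + 2 * α ^ 2) +
        n ^ 4 * x * (x ^ 3 + 6 * x ^ 2 * α + 11 * x * α ^ 2 + 6 * α ^ 3)) / (n : ℝ) ^ 4 := by
  have hn' : (0:ℝ) < n := by exact_mod_cast hn
  have hc : (0:ℝ) < 1 + (n:ℝ) * α := by positivity
  set z : ℝ := (n:ℝ) / (1 + (n:ℝ) * α) with hzdef
  have hz : 0 ≤ z := by positivity
  have hαz : α * z < 1 := by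
    rw [hzdef, show α * ((n:ℝ) / (1 + (n:ℝ) * α)) = α * (n:ℝ) / (1 + (n:ℝ) * α) by ring,
      div_lt_one hc]
    nlinarith [mul_comm α (n:ℝ)]
  have hC : ∀ k : ℕ, Cval x α z k
      = risingFac x α k * ((n:ℝ) ^ k * (1 + (n:ℝ) * α) ^ (x / α)) := by
    intro k
    have h1z : 1 - α * z = (1 + (n:ℝ) * α)⁻¹ := by
      rw [hzdef]; field_simp; ring
    have hexp : -(-(x + (k:ℝ) * α) / α) = x / α + (k:ℝ) := by
      field_simp
    have hzc : z ^ k * (1 + (n:ℝ) * α) ^ k = (n:ℝ) ^ k := by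
      rw [← mul_pow]; congr 1; rw [hzdef]; field_simp
    rw [Cval, h1z, Real.inv_rpow hc.le, ← Real.rpow_neg hc.le, hexp,
      Real.rpow_add hc, Real.rpow_natCast]
    calc z ^ k * risingFac x α k * ((1 + (n:ℝ) * α) ^ (x / α) * (1 + (n:ℝ) * α) ^ k)
        = risingFac x α k * ((z ^ k * (1 + (n:ℝ) * α) ^ k) * (1 + (n:ℝ) * α) ^ (x / α)) := by
          ring
      _ = risingFac x α k * ((n:ℝ) ^ k * (1 + (n:ℝ) * α) ^ (x / α)) := by rw [hzc]
  have hAP : (1 + (n:ℝ) * α) ^ (-x / α) * (1 + (n:ℝ) * α) ^ (x / α) = 1 := by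
    rw [← Real.rpow_add hc, show -x / α + x / α = 0 by ring, Real.rpow_zero]
  have hR0 : risingFac x α 0 = 1 := Aux.risingFac_zero x α
  have hR1 : risingFac x α 1 = x := by
    rw [show (1:ℕ) = 0 + 1 from rfl, Aux.risingFac_succ, hR0]; push_cast; ring
  have hR2 : risingFac x α 2 = x * (x + α) := by
    rw [show (2:ℕ) = 1 + 1 from rfl, Aux.risingFac_succ, hR1]; push_cast; ring
  have hR3 : risingFac x α 3 = x * (x + α) * (x + 2 * α) := by
    rw [show (3:ℕ) = 2 + 1 from rfl, Aux.risingFac_succ, hR2]; push_cast; ring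
  have hR4 : risingFac x α 4 = x * (x + α) * (x + 2 * α) * (x + 3 * α) := by
    rw [show (4:ℕ) = 3 + 1 from rfl, Aux.risingFac_succ, hR3]; push_cast; ring
  constructor
  · have e3 := Aux.U_pow_eq n hn α x hα 3
    rw [← hzdef] at e3
    rw [Aux.moment3 hx hα hz hαz, hC 0, hC 1, hC 2, hC 3, hR0, hR1, hR2, hR3] at e3
    have key : U n α (fun t => t ^ 3) x
        = ((1 + (n:ℝ) * α) ^ (-x / α) * (1 + (n:ℝ) * α) ^ (x / α)) *
          ((6 + 18 * (n:ℝ) * x + 9 * (n:ℝ) ^ 2 * (x * (x + α))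
            + (n:ℝ) ^ 3 * (x * (x + α) * (x + 2 * α))) / (n:ℝ) ^ 3) := by
      rw [e3]; push_cast; ring
    rw [key, hAP]
    field_simp
    ring
  · have e4 := Aux.U_pow_eq n hn α x hα 4
    rw [← hzdef] at e4
    rw [Aux.moment4 hx hα hz hαz, hC 0, hC 1, hC 2, hC 3, hC 4, hR0, hR1, hR2, hR3, hR4] at e4
    have key : U n α (fun t => t ^ 4) x
        = ((1 + (n:ℝ) * α) ^ (-x / α) * (1 + (n:ℝ) * α) ^ (x / α)) *
          ((24 + 96 * (n:ℝ) * x + 72 * (n:ℝ) ^ 2 * (x * (x + α))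
            + 16 * (n:ℝ) ^ 3 * (x * (x + α) * (x + 2 * α))
            + (n:ℝ) ^ 4 * (x * (x + α) * (x + 2 * α) * (x + 3 * α))) / (n:ℝ) ^ 4) := by
      rw [e4]; push_cast; ring
    rw [key, hAP]
    field_simp
    ring
end

section
/- For every positive integer n, every real α with 0 < α ≤ 1/n and every real x ≥ 0, the first and second central moments satisfy Θ_{n,1}^[α](x) = 1/n and Θ_{n,2}^[α](x) = (α n² x + 2nx + 2)/n². -/
open MeasureTheory Filter

open Set Topology

section Aux

noncomputable def pochCoef (c : ℝ) (i : ℕ) : ℝ :=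
  (ascPochhammer ℝ i).eval c / (Nat.factorial i : ℝ)

lemma pochCoef_zero (c : ℝ) : pochCoef c 0 = 1 := by simp [pochCoef]

lemma pochCoef_succ (c : ℝ) (i : ℕ) :
    pochCoef c (i + 1) * ((i : ℝ) + 1) = pochCoef c i * (c + i) := by
  unfold pochCoef
  rw [ascPochhammer_succ_eval]
  have h1 : (Nat.factorial (i + 1) : ℝ) = ((i : ℝ) + 1) * (Nat.factorial i : ℝ) := by
    rw [Nat.factorial_succ]; push_cast; ring
  have h2 : (Nat.factorial i : ℝ) ≠ 0 := Nat.cast_ne_zero.2 (Nat.factorial_ne_zero i)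
  have h3 : ((i : ℝ) + 1) ≠ 0 := by positivity
  rw [h1]
  field_simp [h1]

lemma pochCoef_pos {c : ℝ} (hc : 0 < c) (i : ℕ) : 0 < pochCoef c i :=
  div_pos (ascPochhammer_pos i c hc) (by positivity)

lemma ratio_tendsto (c z : ℝ) :
    Tendsto (fun n : ℕ => (c + (n : ℝ)) / ((n : ℝ) + 1) * z) atTop (𝓝 z) := by
  have h1 : Tendsto (fun n : ℕ => (c + (n : ℝ)) / ((n : ℝ) + 1)) atTop (𝓝 1) := by
    have hd : Tendsto (fun n : ℕ => (n : ℝ) + 1) atTop atTop :=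
      tendsto_atTop_add_const_right _ 1 tendsto_natCast_atTop_atTop
    have h0 : Tendsto (fun n : ℕ => (c - 1) / ((n : ℝ) + 1)) atTop (𝓝 0) :=
      Tendsto.div_atTop tendsto_const_nhds hd
    have := h0.add (tendsto_const_nhds (x := (1 : ℝ)))
    rw [zero_add] at this
    refine this.congr' ?_
    filter_upwards [eventually_gt_atTop 0] with n _
    have : ((n : ℝ) + 1) ≠ 0 := by positivity
    field_simp
    ring
  simpa using h1.mul_const z

lemma binom_hasSum (c z : ℝ) (hc : 0 ≤ c) (hz0 : 0 ≤ z) (hz1 : z < 1) :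
    HasSum (fun i : ℕ => pochCoef c i * z ^ i) ((1 - z) ^ (-c) : ℝ) := by
  rcases eq_or_lt_of_le hc with hc0 | hc
  · -- c = 0
    have hval : ((1 - z : ℝ) ^ (-c) : ℝ) = 1 := by
      rw [← hc0, neg_zero, Real.rpow_zero]
    rw [hval]
    have h := hasSum_single (f := fun i : ℕ => pochCoef c i * z ^ i) 0 (fun b hb => by
      have h0 : (ascPochhammer ℝ b).eval c = 0 := by
        rw [← hc0]; exact ascPochhammer_ne_zero_eval_zero (S := ℝ) hb
      simp [pochCoef, h0])
    simpa [pochCoef_zero] using h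
  rcases eq_or_lt_of_le hz0 with hz0' | hz
  · -- z = 0
    have hval : ((1 - z : ℝ) ^ (-c) : ℝ) = 1 := by
      rw [← hz0', sub_zero, Real.one_rpow]
    rw [hval]
    have h := hasSum_single (f := fun i : ℕ => pochCoef c i * z ^ i) 0 (fun b hb => by
      simp [← hz0', zero_pow hb])
    simpa [pochCoef_zero] using h
  -- main case : 0 < c, 0 < z < 1
  set r : ℝ := (1 + z) / 2 with hrdef
  have hzr : z < r := by rw [hrdef]; linarith
  have hr0 : 0 < r := by rw [hrdef]; linarith
  have hr1 : r < 1 := by rw [hrdef]; linarith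
  set p : ℕ → ℝ := pochCoef c with hp_def
  have hp : ∀ i, 0 < p i := pochCoef_pos hc
  set g : ℕ → ℝ → ℝ := fun i y => p i * y ^ i with hg_def
  set g' : ℕ → ℝ → ℝ := fun i y => p i * ((i : ℝ) * y ^ (i - 1)) with hg'_def
  set u : ℕ → ℝ := fun i => p i * ((i : ℝ) * r ^ (i - 1)) with hu_def
  have hupos : ∀ i, 1 ≤ i → 0 < u i := by
    intro i hi
    have : (0 : ℝ) < (i : ℝ) := by exact_mod_cast hi
    exact mul_pos (hp i) (mul_pos this (pow_pos hr0 _))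
  have hsuccu : ∀ m : ℕ, u (m + 2) = p (m + 1) * ((c + ((m : ℝ) + 1)) * r ^ (m + 1)) := by
    intro m
    have h := pochCoef_succ c (m + 1)
    have : u (m + 2) = (p (m + 2) * (((m : ℝ) + 1) + 1)) * r ^ (m + 1) := by
      simp only [hu_def]
      push_cast
      ring_nf
    simp only [← hp_def] at h
    push_cast at h
    rw [this]
    linear_combination (r ^ (m + 1)) * h
  have hu : Summable u := by
    apply summable_of_ratio_test_tendsto_lt_one hr1
    · filter_upwards [eventually_ge_atTop 1] with n hn
      exact ne_of_gt (hupos n hn)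
    · rw [← tendsto_add_atTop_iff_nat 1]
      refine (ratio_tendsto (c + 1) r).congr (fun m => ?_)
      have h1 : u (m + 1 + 1) = p (m + 1) * ((c + ((m : ℝ) + 1)) * r ^ (m + 1)) := hsuccu m
      have h2 : u (m + 1) = p (m + 1) * (((m : ℝ) + 1) * r ^ m) := by
        simp only [hu_def]; push_cast; ring_nf
      rw [Real.norm_eq_abs, Real.norm_eq_abs, h1, h2,
        abs_of_pos, abs_of_pos]
      · have hpne : p (m + 1) ≠ 0 := ne_of_gt (hp _)
        have hmne : ((m : ℝ) + 1) ≠ 0 := by positivity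
        have hrne : r ≠ 0 := ne_of_gt hr0
        rw [pow_succ]
        field_simp
        ring
      · exact mul_pos (hp _) (mul_pos (by positivity) (pow_pos hr0 _))
      · have : (0:ℝ) < c + ((m:ℝ)+1) := by positivity
        exact mul_pos (hp _) (mul_pos this (pow_pos hr0 _))
  set t : Set ℝ := Set.Ioo (-r) r with ht_def
  have ht : IsOpen t := isOpen_Ioo
  have h't : IsPreconnected t := (convex_Ioo _ _).isPreconnected
  have hy₀ : (0 : ℝ) ∈ t := ⟨by linarith, hr0⟩
  have hg : ∀ i : ℕ, ∀ y : ℝ, y ∈ t → HasDerivAt (g i) (g' i y) y := by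
    intro i y _
    simpa only [hg_def, hg'_def] using (hasDerivAt_pow i y).const_mul (p i)
  have hg' : ∀ i : ℕ, ∀ y : ℝ, y ∈ t → ‖g' i y‖ ≤ u i := by
    intro i y hy
    have hyr : |y| ≤ r := by
      rw [abs_le]; exact ⟨hy.1.le, hy.2.le⟩
    simp only [hg'_def, hu_def]
    rw [Real.norm_eq_abs, abs_mul, abs_mul, abs_of_pos (hp i), abs_of_nonneg (Nat.cast_nonneg i),
      abs_pow]
    refine mul_le_mul_of_nonneg_left ?_ (hp i).le
    exact mul_le_mul_of_nonneg_left (pow_le_pow_left₀ (abs_nonneg y) hyr _) (Nat.cast_nonneg i)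
  have hg0 : Summable (fun i => g i 0) := by
    apply summable_of_ne_finset_zero (s := {0})
    intro b hb
    have hb' : b ≠ 0 := by simpa using hb
    simp [hg_def, zero_pow hb']
  set F : ℝ → ℝ := fun y => ∑' i, g i y with hF_def
  set D : ℝ → ℝ := fun y => ∑' i, g' i y with hD_def
  have hFderiv : ∀ y ∈ t, HasDerivAt F (D y) y := by
    intro y hy
    exact hasDerivAt_tsum_of_isPreconnected hu ht h't hg hg' hy₀ hg0 hy
  have hFsum : ∀ y ∈ t, Summable (fun i => g i y) := by
    intro y hy
    exact summable_of_summable_hasDerivAt_of_isPreconnected hu ht h't hg hg' hy₀ hg0 hy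
  have hDsum : ∀ y ∈ t, Summable (fun i => g' i y) := by
    intro y hy
    exact Summable.of_norm_bounded hu (fun i => hg' i y hy)
  have hkey : ∀ y ∈ t, (1 - y) * D y = c * F y := by
    intro y hy
    have hs := hDsum y hy
    have hFs := hFsum y hy
    have e2 : ∀ j : ℕ, g' (j + 1) y = c * g j y + y * g' j y := by
      intro j
      have h := pochCoef_succ c j
      cases j with
      | zero =>
        simp only [hg_def, hg'_def, hp_def]
        simp [pochCoef_zero]
        have := pochCoef_succ c 0
        simp [pochCoef_zero] at this
        simpa using this
      | succ k =>
        simp only [hg_def, hg'_def]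
        have hps : p (k + 2) * (((k : ℝ) + 1) + 1) = p (k + 1) * (c + ((k : ℝ) + 1)) := by
          have := pochCoef_succ c (k + 1)
          push_cast at this ⊢
          linarith [this]
        have expand : g' (k + 2) y = (p (k + 2) * (((k : ℝ) + 1) + 1)) * y ^ (k + 1) := by
          simp only [hg'_def]
          push_cast
          ring_nf
        calc p (k+1+1) * (((k:ℕ)+1+1 : ℕ) * y ^ (k+1+1-1))
            = (p (k + 2) * (((k : ℝ) + 1) + 1)) * y ^ (k + 1) := by push_cast; ring_nf
          _ = (p (k + 1) * (c + ((k : ℝ) + 1))) * y ^ (k + 1) := by rw [hps]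
          _ = c * (p (k+1) * y ^ (k+1)) + y * (p (k+1) * (((k:ℕ)+1 : ℕ) * y ^ (k+1-1))) := by
              push_cast
              rw [pow_succ]
              ring
    have e1 : D y = ∑' j, g' (j + 1) y := by
      rw [hD_def]
      simp only
      rw [Summable.tsum_eq_zero_add hs]
      simp [hg'_def]
    have e3 : D y = c * F y + y * D y := by
      conv_lhs => rw [e1]
      have he : (fun j => g' (j + 1) y) = fun j => c * g j y + y * g' j y := funext e2
      rw [he, Summable.tsum_add (hFs.mul_left c) (hs.mul_left y), tsum_mul_left, tsum_mul_left]
    linarith [e3]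
  set H : ℝ → ℝ := fun y => (1 - y) ^ c * F y with hH_def
  have hH : ∀ y ∈ t, HasDerivAt H 0 y := by
    intro y hy
    have h1y : (0 : ℝ) < 1 - y := by have := hy.2; linarith
    have d0 : HasDerivAt (fun w : ℝ => 1 - w) (-1 : ℝ) y := by
      simpa using (hasDerivAt_id y).const_sub (1:ℝ)
    have d1 : HasDerivAt (fun w : ℝ => (1 - w) ^ c) (c * (1 - y) ^ (c - 1) * (-1)) y := by
      exact (Real.hasDerivAt_rpow_const (Or.inl (ne_of_gt h1y))).comp y d0
    have d2 := d1.mul (hFderiv y hy)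
    have hval : c * (1 - y) ^ (c - 1) * (-1) * F y + (1 - y) ^ c * D y = 0 := by
      have hsplit : (1 - y) ^ c = (1 - y) ^ (c - 1) * (1 - y) := by
        rw [← Real.rpow_add_one (ne_of_gt h1y) (c - 1)]
        ring_nf
      rw [hsplit]
      have hk := hkey y hy
      linear_combination ((1 - y) ^ (c - 1)) * hk
    rw [← hval]
    exact d2
  have hzt : z ∈ t := ⟨by linarith, hzr⟩
  have hsub : Set.Icc (0 : ℝ) z ⊆ t := by
    intro y hy
    exact ⟨by linarith [hy.1], lt_of_le_of_lt hy.2 hzr⟩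
  have hdiff : DifferentiableOn ℝ H (Set.Icc 0 z) := by
    intro y hy
    exact ((hH y (hsub hy)).differentiableAt).differentiableWithinAt
  have hderiv : ∀ y ∈ Set.Ico (0 : ℝ) z, derivWithin H (Set.Icc 0 z) y = 0 := by
    intro y hy
    have hyt : y ∈ t := hsub ⟨hy.1, hy.2.le⟩
    have := (hH y hyt).hasDerivWithinAt (s := Set.Icc (0:ℝ) z)
    exact this.derivWithin ((uniqueDiffOn_Icc hz) y ⟨hy.1, hy.2.le⟩)
  have hconst := constant_of_derivWithin_zero hdiff hderiv z ⟨hz.le, le_refl z⟩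
  have hF0 : F 0 = 1 := by
    rw [hF_def]
    simp only
    rw [tsum_eq_single 0 (fun b hb => by simp [hg_def, zero_pow hb])]
    simp [hg_def, hp_def, pochCoef_zero]
  have hH0 : H 0 = 1 := by
    rw [hH_def]; simp only [sub_zero, Real.one_rpow, hF0, one_mul]
  have hHz : (1 - z) ^ c * F z = 1 := by
    have : H z = 1 := hconst.trans hH0
    exact this
  have h1z : (0 : ℝ) < 1 - z := by linarith
  have hpow : ((1 - z : ℝ) ^ c : ℝ) ≠ 0 := ne_of_gt (Real.rpow_pos_of_pos h1z c)
  have hFz : F z = (1 - z) ^ (-c) := by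
    rw [Real.rpow_neg h1z.le]
    field_simp at hHz ⊢
    linarith [hHz]
  have := (hFsum z hzt).hasSum
  rw [show ∑' i, g i z = F z from rfl, hFz] at this
  exact this


lemma szasz_eq (n i k : ℕ) : (fun u : ℝ => szaszBasis n i u * u ^ k)
    = fun u => ((n : ℝ) ^ i / (Nat.factorial i : ℝ)) * (u ^ (i + k) * Real.exp (-((n:ℝ) * u))) := by
  funext u
  unfold szaszBasis
  rw [mul_pow, pow_add, neg_mul]
  ring

lemma base_integrable (n m : ℕ) (hn : 0 < n) :
    IntegrableOn (fun u : ℝ => u ^ m * Real.exp (-((n:ℝ) * u))) (Ioi 0) := by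
  have h := integrableOn_rpow_mul_exp_neg_mul_rpow (p := 1) (s := (m : ℝ)) (b := (n : ℝ))
    (lt_of_lt_of_le neg_one_lt_zero (Nat.cast_nonneg m)) one_pos (by exact_mod_cast hn)
  refine h.congr_fun (fun u hu => ?_) measurableSet_Ioi
  beta_reduce
  rw [Real.rpow_natCast, Real.rpow_one, neg_mul]

lemma szasz_integrable (n i k : ℕ) (hn : 0 < n) :
    IntegrableOn (fun u : ℝ => szaszBasis n i u * u ^ k) (Ioi 0) := by
  rw [szasz_eq]
  exact (base_integrable n (i + k) hn).const_mul _

lemma base_integral (n m : ℕ) (hn : 0 < n) :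
    ∫ u in Ioi (0:ℝ), u ^ m * Real.exp (-((n:ℝ) * u))
      = (Nat.factorial m : ℝ) / (n : ℝ) ^ (m + 1) := by
  have hn' : (0:ℝ) < n := by exact_mod_cast hn
  have h := Real.integral_rpow_mul_exp_neg_mul_Ioi (a := (m : ℝ) + 1) (r := (n : ℝ))
    (by positivity) hn'
  have he : ∀ u ∈ Ioi (0:ℝ), u ^ ((m : ℝ) + 1 - 1) * Real.exp (-((n:ℝ) * u))
      = u ^ m * Real.exp (-((n:ℝ) * u)) := by
    intro u _
    rw [add_sub_cancel_right, Real.rpow_natCast]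
  rw [setIntegral_congr_fun measurableSet_Ioi he] at h
  rw [h]
  rw [show ((m : ℝ) + 1) = ((m + 1 : ℕ) : ℝ) by push_cast; ring, Real.rpow_natCast,
    show ((m + 1 : ℕ) : ℝ) = (m : ℝ) + 1 by push_cast; ring, Real.Gamma_nat_eq_factorial]
  rw [div_pow, one_pow]
  ring

lemma szasz_integral (n i k : ℕ) (hn : 0 < n) :
    ∫ u in Ioi (0:ℝ), szaszBasis n i u * u ^ k
      = (Nat.factorial (i + k) : ℝ) / ((Nat.factorial i : ℝ) * (n : ℝ) ^ (k + 1)) := by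
  rw [szasz_eq, integral_const_mul, base_integral n (i + k) hn]
  have hn' : (0:ℝ) < n := by exact_mod_cast hn
  have h1 : ((n:ℝ)) ^ (i + k + 1) = (n:ℝ) ^ i * (n:ℝ) ^ (k + 1) := by
    rw [← pow_add]; ring_nf
  rw [h1]
  have h2 : (Nat.factorial i : ℝ) ≠ 0 := Nat.cast_ne_zero.2 (Nat.factorial_ne_zero i)
  field_simp

lemma pochCoef_shift (c : ℝ) (j : ℕ) :
    ((j : ℝ) + 1) * pochCoef c (j + 1) = c * pochCoef (c + 1) j := by
  unfold pochCoef
  rw [ascPochhammer_succ_left, Polynomial.eval_mul, Polynomial.eval_X, Polynomial.eval_comp,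
    Polynomial.eval_add, Polynomial.eval_X, Polynomial.eval_one]
  have hfac : (Nat.factorial (j + 1) : ℝ) = ((j : ℝ) + 1) * (Nat.factorial j : ℝ) := by
    rw [Nat.factorial_succ]; push_cast; ring
  have h2 : (Nat.factorial j : ℝ) ≠ 0 := Nat.cast_ne_zero.2 (Nat.factorial_ne_zero j)
  have h3 : ((j : ℝ) + 1) ≠ 0 := by positivity
  rw [hfac]
  field_simp

lemma risingFac_eq (x α : ℝ) (hα : α ≠ 0) (i : ℕ) :
    risingFac x α i = α ^ i * (ascPochhammer ℝ i).eval (x / α) := by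
  induction i with
  | zero => simp [risingFac]
  | succ k ih =>
    rw [risingFac, Finset.prod_range_succ, ← risingFac, ih, ascPochhammer_succ_eval, pow_succ]
    field_simp

lemma J1int (n i : ℕ) (hn : 0 < n) (x : ℝ) :
    ∫ u in Ioi (0:ℝ), szaszBasis n i u * (u - x) ^ 1
      = ((i:ℝ) + 1) / (n:ℝ) ^ 2 - x / (n:ℝ) := by
  have h : (fun u : ℝ => szaszBasis n i u * (u - x) ^ 1)
      = fun u => (szaszBasis n i u * u ^ 1) - x * (szaszBasis n i u * u ^ 0) := by
    funext u; ring
  rw [h, integral_sub (szasz_integrable n i 1 hn) ((szasz_integrable n i 0 hn).const_mul x),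
    integral_const_mul, szasz_integral n i 1 hn, szasz_integral n i 0 hn]
  have hfac : (Nat.factorial (i + 1) : ℝ) = ((i:ℝ) + 1) * (Nat.factorial i : ℝ) := by
    rw [Nat.factorial_succ]; push_cast; ring
  have h2 : (Nat.factorial i : ℝ) ≠ 0 := Nat.cast_ne_zero.2 (Nat.factorial_ne_zero i)
  have hn' : ((n:ℝ)) ≠ 0 := by
    have : (0:ℝ) < n := by exact_mod_cast hn
    exact ne_of_gt this
  rw [hfac]
  field_simp
  ring

lemma J2int (n i : ℕ) (hn : 0 < n) (x : ℝ) :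
    ∫ u in Ioi (0:ℝ), szaszBasis n i u * (u - x) ^ 2
      = ((i:ℝ) + 1) * ((i:ℝ) + 2) / (n:ℝ) ^ 3 - 2 * x * ((i:ℝ) + 1) / (n:ℝ) ^ 2
        + x ^ 2 / (n:ℝ) := by
  have h : (fun u : ℝ => szaszBasis n i u * (u - x) ^ 2)
      = fun u => ((szaszBasis n i u * u ^ 2) - (2 * x) * (szaszBasis n i u * u ^ 1))
          + x ^ 2 * (szaszBasis n i u * u ^ 0) := by
    funext u; ring
  have hI : IntegrableOn
      (fun u : ℝ => szaszBasis n i u * u ^ 2 - 2 * x * (szaszBasis n i u * u ^ 1)) (Ioi 0) :=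
    (szasz_integrable n i 2 hn).sub ((szasz_integrable n i 1 hn).const_mul (2 * x))
  rw [h, integral_add hI ((szasz_integrable n i 0 hn).const_mul (x ^ 2)),
    integral_sub (szasz_integrable n i 2 hn) ((szasz_integrable n i 1 hn).const_mul (2 * x)),
    integral_const_mul, integral_const_mul, szasz_integral n i 2 hn, szasz_integral n i 1 hn,
    szasz_integral n i 0 hn]
  have hfac1 : (Nat.factorial (i + 1) : ℝ) = ((i:ℝ) + 1) * (Nat.factorial i : ℝ) := by
    rw [Nat.factorial_succ]; push_cast; ring
  have hfac2 : (Nat.factorial (i + 2) : ℝ) = ((i:ℝ) + 2) * (((i:ℝ) + 1) * (Nat.factorial i : ℝ)) := by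
    rw [show i + 2 = (i+1) + 1 by ring, Nat.factorial_succ, ← hfac1]
    push_cast; ring
  have h2 : (Nat.factorial i : ℝ) ≠ 0 := Nat.cast_ne_zero.2 (Nat.factorial_ne_zero i)
  have hn' : ((n:ℝ)) ≠ 0 := by
    have : (0:ℝ) < n := by exact_mod_cast hn
    exact ne_of_gt this
  rw [show i + 1 + 1 = i + 2 by ring] at *
  rw [hfac1, hfac2]
  field_simp
  ring

end Aux

theorem stmt4 (n : ℕ) (hn : 0 < n) (α : ℝ) (hα : 0 < α) (hαn : α ≤ 1 / n)
    (x : ℝ) (hx : 0 ≤ x) :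
    theta n α 1 x = 1 / n ∧
    theta n α 2 x = (α * n ^ 2 * x + 2 * n * x + 2) / (n : ℝ) ^ 2 := by
  have hn' : (0:ℝ) < n := by exact_mod_cast hn
  have hnne : (n:ℝ) ≠ 0 := ne_of_gt hn'
  have hα0 : α ≠ 0 := ne_of_gt hα
  set P : ℝ := 1 + (n:ℝ) * α with hP
  have hP0 : 0 < P := by rw [hP]; nlinarith
  have hPne : P ≠ 0 := ne_of_gt hP0
  set w : ℝ := α * (n:ℝ) / P with hw
  have hw0 : 0 ≤ w := by
    apply div_nonneg _ hP0.le
    positivity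
  have hw1 : w < 1 := by
    rw [hw, div_lt_one hP0, hP]; nlinarith
  have h1w : 1 - w = P⁻¹ := by
    rw [hw, hP]; field_simp; ring
  set c : ℝ := x / α with hc
  have hc0 : 0 ≤ c := div_nonneg hx hα.le
  -- the basic kernel identity
  have hbase : ∀ i : ℕ, (α + 1 / (n:ℝ)) ^ (-(i:ℤ)) * (risingFac x α i / (Nat.factorial i : ℝ))
      = pochCoef c i * w ^ i := by
    intro i
    rw [zpow_neg, zpow_natCast, risingFac_eq x α hα0 i]
    have hαn' : α + 1/(n:ℝ) = P / n := by rw [hP]; field_simp; ring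
    rw [hαn', ← inv_pow, inv_div]
    simp only [pochCoef, hc, hw]
    have h2 : (Nat.factorial i : ℝ) ≠ 0 := Nat.cast_ne_zero.2 (Nat.factorial_ne_zero i)
    field_simp
    ring
  have hAP' : (1 + (n:ℝ) * α) ^ (-x / α) = P ^ (-c) := by
    rw [hP, hc, neg_div]
  -- rpow identities
  have hinv : ∀ y : ℝ, ((1 - w) ^ (-y) : ℝ) = P ^ y := by
    intro y
    rw [h1w, Real.inv_rpow hP0.le, Real.rpow_neg hP0.le, inv_inv]
  have k0 : P ^ (-c) * ((1 - w) ^ (-c) : ℝ) = 1 := by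
    rw [hinv c, ← Real.rpow_add hP0, show -c + c = (0:ℝ) by ring, Real.rpow_zero]
  have k1 : P ^ (-c) * (c * w * ((1 - w) ^ (-(c+1)) : ℝ)) = (n:ℝ) * x := by
    rw [hinv (c+1)]
    rw [show P ^ (-c) * (c * w * P ^ (c+1)) = c * w * (P ^ (-c) * P ^ (c+1)) by ring,
      ← Real.rpow_add hP0, show -c + (c+1) = (1:ℝ) by ring, Real.rpow_one]
    rw [hc, hw]
    field_simp
  have k2 : P ^ (-c) * (c * (c+1) * w^2 * ((1 - w) ^ (-(c+2)) : ℝ)) = (n:ℝ)^2 * (x * (x + α)) := by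
    rw [hinv (c+2)]
    rw [show P ^ (-c) * (c * (c+1) * w^2 * P ^ (c+2)) = c * (c+1) * w^2 * (P ^ (-c) * P ^ (c+2))
        by ring,
      ← Real.rpow_add hP0, show -c + (c+2) = ((2:ℕ):ℝ) by push_cast; ring, Real.rpow_natCast]
    rw [hc, hw]
    field_simp
  -- the three hasSum facts
  have hS0 : HasSum (fun i : ℕ => pochCoef c i * w ^ i) (((1 - w) ^ (-c) : ℝ)) :=
    binom_hasSum c w hc0 hw0 hw1
  have hS1 : HasSum (fun i : ℕ => (i:ℝ) * (pochCoef c i * w ^ i))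
      (c * w * ((1 - w) ^ (-(c+1)) : ℝ)) := by
    have hb := (binom_hasSum (c+1) w (by linarith) hw0 hw1).mul_left (c * w)
    have he : (fun j : ℕ => c * w * (pochCoef (c+1) j * w ^ j))
        = fun j : ℕ => ((j + 1 : ℕ) : ℝ) * (pochCoef c (j+1) * w ^ (j+1)) := by
      funext j
      push_cast
      rw [pow_succ]
      linear_combination (-(w ^ j * w)) * pochCoef_shift c j
    rw [he] at hb
    have h3 := (hasSum_nat_add_iff (f := fun i : ℕ => (i:ℝ) * (pochCoef c i * w ^ i)) 1).mp hb
    simpa using h3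
  have hS2 : HasSum (fun i : ℕ => (i:ℝ) * ((i:ℝ) - 1) * (pochCoef c i * w ^ i))
      (c * (c+1) * w^2 * ((1 - w) ^ (-(c+2)) : ℝ)) := by
    have hb := (binom_hasSum (c+2) w (by linarith) hw0 hw1).mul_left (c * (c+1) * w^2)
    have he : (fun j : ℕ => c * (c+1) * w^2 * (pochCoef (c+2) j * w ^ j))
        = fun j : ℕ => ((j + 2 : ℕ) : ℝ) * (((j + 2 : ℕ) : ℝ) - 1) * (pochCoef c (j+2) * w ^ (j+2)) := by
      funext j
      have s1 := pochCoef_shift c (j+1)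
      rw [show j + 1 + 1 = j + 2 from rfl] at s1
      have s2 := pochCoef_shift (c+1) j
      rw [show c + 1 + 1 = c + 2 by ring] at s2
      push_cast at s1 s2 ⊢
      rw [pow_succ, pow_succ]
      linear_combination (-(w ^ j * w * w * ((j:ℝ)+1))) * s1 + (-(w ^ j * w * w * c)) * s2
    rw [he] at hb
    have h3 := (hasSum_nat_add_iff
      (f := fun i : ℕ => (i:ℝ) * ((i:ℝ) - 1) * (pochCoef c i * w ^ i)) 2).mp hb
    simpa [Finset.sum_range_succ] using h3
  -- clean sums
  have hT0 : HasSum (fun i : ℕ => P ^ (-c) * (pochCoef c i * w ^ i)) 1 := by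
    have := hS0.mul_left (P ^ (-c)); rwa [k0] at this
  have hT1 : HasSum (fun i : ℕ => P ^ (-c) * ((i:ℝ) * (pochCoef c i * w ^ i))) ((n:ℝ) * x) := by
    have := hS1.mul_left (P ^ (-c)); rwa [k1] at this
  have hT2 : HasSum (fun i : ℕ => P ^ (-c) * ((i:ℝ) * ((i:ℝ) - 1) * (pochCoef c i * w ^ i)))
      ((n:ℝ)^2 * (x * (x + α))) := by
    have := hS2.mul_left (P ^ (-c)); rwa [k2] at this
  constructor
  · -- first moment
    have hterm1 : (fun i : ℕ => (1 + (n : ℝ) * α) ^ (-x / α) * (α + 1 / (n : ℝ)) ^ (-(i : ℤ)) *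
        (risingFac x α i / (Nat.factorial i : ℝ)) *
        ∫ u in Set.Ioi (0 : ℝ), szaszBasis n i u * (u - x) ^ 1)
        = fun i : ℕ => (1/(n:ℝ)^2) * (P ^ (-c) * ((i:ℝ) * (pochCoef c i * w ^ i)))
          + (1/(n:ℝ)^2 - x/(n:ℝ)) * (P ^ (-c) * (pochCoef c i * w ^ i)) := by
      funext i
      rw [J1int n i hn x]
      have hb := hbase i
      linear_combination ((1 + (n:ℝ) * α) ^ (-x / α) * (((i:ℝ)+1)/(n:ℝ)^2 - x/(n:ℝ))) * hb
        + ((pochCoef c i * w ^ i) * (((i:ℝ)+1)/(n:ℝ)^2 - x/(n:ℝ))) * hAP'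
    have hcomb := (hT1.mul_left (1/(n:ℝ)^2)).add (hT0.mul_left (1/(n:ℝ)^2 - x/(n:ℝ)))
    simp only [theta, U]
    rw [hterm1, hcomb.tsum_eq]
    field_simp
    ring
  · -- second moment
    have hterm2 : (fun i : ℕ => (1 + (n : ℝ) * α) ^ (-x / α) * (α + 1 / (n : ℝ)) ^ (-(i : ℤ)) *
        (risingFac x α i / (Nat.factorial i : ℝ)) *
        ∫ u in Set.Ioi (0 : ℝ), szaszBasis n i u * (u - x) ^ 2)
        = fun i : ℕ => (1/(n:ℝ)^3) * (P ^ (-c) * ((i:ℝ) * ((i:ℝ) - 1) * (pochCoef c i * w ^ i)))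
          + (4/(n:ℝ)^3 - 2*x/(n:ℝ)^2) * (P ^ (-c) * ((i:ℝ) * (pochCoef c i * w ^ i)))
          + (2/(n:ℝ)^3 - 2*x/(n:ℝ)^2 + x^2/(n:ℝ)) * (P ^ (-c) * (pochCoef c i * w ^ i)) := by
      funext i
      rw [J2int n i hn x]
      have hb := hbase i
      linear_combination ((1 + (n:ℝ) * α) ^ (-x / α) *
          (((i:ℝ)+1) * ((i:ℝ)+2)/(n:ℝ)^3 - 2*x*((i:ℝ)+1)/(n:ℝ)^2 + x^2/(n:ℝ))) * hb
        + ((pochCoef c i * w ^ i) *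
          (((i:ℝ)+1) * ((i:ℝ)+2)/(n:ℝ)^3 - 2*x*((i:ℝ)+1)/(n:ℝ)^2 + x^2/(n:ℝ))) * hAP'
    have hcomb := ((hT2.mul_left (1/(n:ℝ)^3)).add
        (hT1.mul_left (4/(n:ℝ)^3 - 2*x/(n:ℝ)^2))).add
        (hT0.mul_left (2/(n:ℝ)^3 - 2*x/(n:ℝ)^2 + x^2/(n:ℝ)))
    simp only [theta, U]
    rw [hterm2, hcomb.tsum_eq]
    field_simp
    ring
end

section
/- Take α = α(n) = 1/n. Then for every real x ≥ 0 the following limits hold as n → ∞: n·Θ_{n,1}^[1/n](x) → 1, n·Θ_{n,2}^[1/n](x) → 3x, n²·Θ_{n,4}^[1/n](x) → 27x², and n³·Θ_{n,6}^[1/n](x) → 405x³. -/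
open MeasureTheory Filter

open MeasureTheory Filter Real Set Finset

noncomputable section Aux

/-- Falling factorial as a real product. -/
def fallR (i j : ℕ) : ℝ := ∏ t ∈ Finset.range j, ((i : ℝ) - t)

lemma fact_ratio (i k : ℕ) :
    ((i + k).factorial : ℝ) = (i.factorial : ℝ) * ∏ t ∈ Finset.range k, ((i : ℝ) + t + 1) := by
  induction k with
  | zero => simp
  | succ k ih =>
    rw [show i + (k + 1) = (i + k) + 1 from rfl, Nat.factorial_succ, Finset.prod_range_succ]
    push_cast
    rw [ih]; ring

lemma fallR_add (i j : ℕ) : fallR (i + j) j = ∏ t ∈ Finset.range j, ((i : ℝ) + t + 1) := by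
  induction j with
  | zero => simp [fallR]
  | succ j ih =>
    rw [Finset.prod_range_succ, ← ih]
    unfold fallR
    rw [Finset.prod_range_succ']
    have h1 : ∀ t ∈ Finset.range j, ((i + (j+1) : ℕ) : ℝ) - (t + 1 : ℕ) = ((i + j : ℕ) : ℝ) - t := by
      intro t _; push_cast; ring
    rw [Finset.prod_congr rfl h1]
    congr 1
    push_cast; ring

lemma fallR_mul_factorial (i j : ℕ) :
    fallR (i + j) j * (i.factorial : ℝ) = ((i + j).factorial : ℝ) := by
  rw [fallR_add, fact_ratio]; ring

lemma fallR_eq_zero {i j : ℕ} (h : i < j) : fallR i j = 0 :=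
  Finset.prod_eq_zero (Finset.mem_range.2 h) (by simp)

lemma risingFac_succ (r α : ℝ) (i : ℕ) :
    risingFac r α (i + 1) = risingFac r α i * (r + i * α) := Finset.prod_range_succ _ _

lemma risingFac_nonneg {r : ℝ} (hr : 0 ≤ r) (i : ℕ) : 0 ≤ risingFac r 1 i :=
  Finset.prod_nonneg fun j _ => by positivity

lemma risingFac_add (r : ℝ) (j i : ℕ) :
    risingFac r 1 (j + i) = risingFac r 1 j * risingFac (r + j) 1 i := by
  unfold risingFac
  rw [Finset.prod_range_add]
  congr 1
  refine Finset.prod_congr rfl fun t _ => ?_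
  push_cast; ring

lemma Gamma_risingFac {r : ℝ} (hr : 0 < r) (i : ℕ) :
    Real.Gamma (r + i) = risingFac r 1 i * Real.Gamma r := by
  induction i with
  | zero => simp [risingFac]
  | succ i ih =>
    have : r + (i + 1 : ℕ) = (r + i) + 1 := by push_cast; ring
    rw [this, Real.Gamma_add_one (by positivity), ih, risingFac_succ]
    ring

end Aux

noncomputable section Aux2
open MeasureTheory Filter Real Set Finset

lemma summable_base {r : ℝ} (hr : 0 ≤ r) :
    Summable (fun i : ℕ => risingFac r 1 i / (i.factorial * 2 ^ i)) := by
  obtain ⟨N, hN⟩ := exists_nat_ge (2 * r)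
  refine summable_of_ratio_norm_eventually_le (r := 3/4) (by norm_num) ?_
  filter_upwards [eventually_ge_atTop N] with i hi
  have hfi : (0:ℝ) < i.factorial := by exact_mod_cast i.factorial_pos
  have hfi1 : (0:ℝ) < (i+1).factorial := by exact_mod_cast (i+1).factorial_pos
  have h2 : (0:ℝ) < 2 ^ i := by positivity
  have hnn : 0 ≤ risingFac r 1 i := risingFac_nonneg hr i
  have hnn1 : 0 ≤ risingFac r 1 (i+1) := risingFac_nonneg hr _
  have hnn0 : 0 ≤ risingFac r 1 i := risingFac_nonneg hr _
  rw [Real.norm_eq_abs, Real.norm_eq_abs, abs_of_nonneg (div_nonneg hnn1 (by positivity)),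
    abs_of_nonneg (div_nonneg hnn0 (by positivity))]
  rw [risingFac_succ, Nat.factorial_succ, pow_succ]
  push_cast
  have key : r + i * 1 ≤ 3/4 * (2 * ((i:ℝ) + 1)) := by
    have : 2 * r ≤ (N : ℝ) := hN
    have : (N : ℝ) ≤ i := by exact_mod_cast hi
    nlinarith [hN]
  calc risingFac r 1 i * (r + i * 1) / (((i:ℝ) + 1) * i.factorial * (2 ^ i * 2))
      ≤ risingFac r 1 i * (3/4 * (2 * ((i:ℝ) + 1))) / (((i:ℝ) + 1) * i.factorial * (2 ^ i * 2)) := by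
        refine div_le_div_of_nonneg_right ?_ (by positivity) |>.trans_eq rfl
        exact mul_le_mul_of_nonneg_left key hnn

    _ = 3/4 * (risingFac r 1 i / (i.factorial * 2 ^ i)) := by
        field_simp

lemma hasSum_base {r : ℝ} (hr : 0 ≤ r) :
    HasSum (fun i : ℕ => risingFac r 1 i / (i.factorial * 2 ^ i)) ((2:ℝ) ^ r) := by
  rcases eq_or_lt_of_le hr with hr0 | hr0
  · subst hr0
    have h0 : ∀ i : ℕ, i ≠ 0 → risingFac 0 1 i / (i.factorial * 2 ^ i) = 0 := by
      intro i hi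
      have : risingFac 0 1 i = 0 := by
        refine Finset.prod_eq_zero (Finset.mem_range.2 (Nat.pos_of_ne_zero hi)) ?_
        simp
      simp [this]
    have := hasSum_single (f := fun i : ℕ => risingFac 0 1 i / (i.factorial * 2 ^ i)) 0 h0
    simpa [risingFac] using this
  -- main case r > 0
  have hCpos : 0 < Real.Gamma r := Real.Gamma_pos_of_pos hr0
  set F : ℕ → ℝ → ℝ := fun i u =>
    ((2:ℝ) ^ r / (Real.Gamma r * i.factorial)) * (u ^ (r - 1) * Real.exp (-(2 * u)) * u ^ i) with hF
  have hint : ∀ i : ℕ, IntegrableOn (F i) (Ioi 0) volume := by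
    intro i
    have h := integrableOn_rpow_mul_exp_neg_mul_rpow
      (s := r - 1 + i) (p := 1) (b := 2) (by have : (0:ℝ) ≤ i := Nat.cast_nonneg i; linarith)
      one_pos (by norm_num)
    refine ((h.congr_fun ?_ measurableSet_Ioi).const_mul _ : )
    intro u hu
    rw [Set.mem_Ioi] at hu
    simp only [Real.rpow_one, Real.rpow_add hu, Real.rpow_natCast]
    ring
  have hval : ∀ i : ℕ, ∫ u in Ioi 0, F i u = risingFac r 1 i / (i.factorial * 2 ^ i) := by
    intro i
    have hcong : ∫ u in Ioi 0, F i u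
        = ∫ u in Ioi 0, ((2:ℝ) ^ r / (Real.Gamma r * i.factorial)) * (u ^ ((r + i) - 1) * Real.exp (-(2 * u))) := by
      refine setIntegral_congr_fun measurableSet_Ioi fun u hu => ?_
      rw [Set.mem_Ioi] at hu
      rw [show r + (i:ℝ) - 1 = (r - 1) + (i:ℝ) by ring, Real.rpow_add hu, Real.rpow_natCast]
      ring
    rw [hcong, integral_const_mul,
      Real.integral_rpow_mul_exp_neg_mul_Ioi (by positivity) (by norm_num : (0:ℝ) < 2),
      Gamma_risingFac hr0 i]
    have h2r : (0:ℝ) < (2:ℝ) ^ r := Real.rpow_pos_of_pos two_pos r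
    have h12 : ((1:ℝ)/2) ^ (r + (i:ℝ)) = ((2:ℝ) ^ r * 2 ^ i)⁻¹ := by
      rw [one_div, ← Real.rpow_natCast 2 i, ← Real.rpow_add two_pos,
        Real.inv_rpow (by norm_num)]
    rw [h12]
    have hfi : ((i.factorial : ℝ)) ≠ 0 := by exact_mod_cast i.factorial_ne_zero
    have h2i : ((2:ℝ) ^ i) ≠ 0 := by positivity
    field_simp
  have hnorm : ∀ i : ℕ, (∫ u in Ioi 0, ‖F i u‖) = risingFac r 1 i / (i.factorial * 2 ^ i) := by
    intro i
    rw [← hval i]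
    refine setIntegral_congr_fun measurableSet_Ioi fun u hu => ?_
    rw [Set.mem_Ioi] at hu
    have h1 : (0:ℝ) ≤ u ^ (r - 1) := (Real.rpow_pos_of_pos hu _).le
    rw [Real.norm_eq_abs, abs_of_nonneg]
    exact mul_nonneg (by positivity)
      (mul_nonneg (mul_nonneg h1 (Real.exp_pos _).le) (by positivity))
  have hsum2 : Summable fun i : ℕ => ∫ u in Ioi 0, ‖F i u‖ := by
    simp only [hnorm]
    exact summable_base hr
  have hswap := MeasureTheory.hasSum_integral_of_summable_integral_norm
    (μ := volume.restrict (Ioi 0)) hint hsum2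
  have htsum : ∀ u ∈ Ioi (0:ℝ), (∑' i, F i u)
      = ((2:ℝ) ^ r / Real.Gamma r) * (u ^ (r - 1) * Real.exp (-u)) := by
    intro u hu
    rw [Set.mem_Ioi] at hu
    have he : HasSum (fun i : ℕ => (u:ℝ) ^ i / i.factorial) (Real.exp u) := by
      rw [Real.exp_eq_exp_ℝ]; exact NormedSpace.expSeries_div_hasSum_exp u
    have h2 := he.mul_left ((2:ℝ) ^ r / Real.Gamma r * (u ^ (r - 1) * Real.exp (-(2 * u))))
    have heq : (fun i : ℕ => (2:ℝ) ^ r / Real.Gamma r * (u ^ (r - 1) * Real.exp (-(2 * u)))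
        * ((u:ℝ) ^ i / i.factorial)) = fun i => F i u := by
      funext i; simp only [hF]; ring
    rw [heq] at h2
    rw [h2.tsum_eq]
    have hee : Real.exp (-(2 * u)) * Real.exp u = Real.exp (-u) := by
      rw [← Real.exp_add]; ring_nf
    rw [← hee]; ring
  have hI : (∫ u in Ioi 0, (∑' i, F i u)) = (2:ℝ) ^ r := by
    rw [setIntegral_congr_fun measurableSet_Ioi htsum, integral_const_mul]
    have hG : (∫ u in Ioi 0, u ^ (r - 1) * Real.exp (-u)) = Real.Gamma r := by
      rw [Real.Gamma_eq_integral hr0]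
      exact setIntegral_congr_fun measurableSet_Ioi fun u _ => mul_comm _ _
    rw [hG]
    field_simp
  simp only [hval] at hswap
  rwa [hI] at hswap

end Aux2

noncomputable section Aux3
open MeasureTheory Filter Real Set Finset

lemma hasSum_shift {r : ℝ} (hr : 0 ≤ r) (j : ℕ) :
    HasSum (fun i : ℕ => risingFac r 1 i * fallR i j / (i.factorial * 2 ^ i))
      (risingFac r 1 j * (2:ℝ) ^ r) := by
  have h := (hasSum_base (r := r + j) (by positivity)).mul_left (risingFac r 1 j / 2 ^ j)
  have hval : risingFac r 1 j / 2 ^ j * (2:ℝ) ^ (r + (j:ℝ)) = risingFac r 1 j * 2 ^ r := by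
    rw [Real.rpow_add two_pos, Real.rpow_natCast]
    have : ((2:ℝ) ^ j) ≠ 0 := by positivity
    field_simp
  rw [hval] at h
  have hpt : ∀ i : ℕ,
      risingFac r 1 (i + j) * fallR (i + j) j / ((i + j).factorial * 2 ^ (i + j))
        = risingFac r 1 j / 2 ^ j * (risingFac (r + j) 1 i / (i.factorial * 2 ^ i)) := by
    intro i
    have h1 : risingFac r 1 (i + j) = risingFac r 1 j * risingFac (r + j) 1 i := by
      rw [add_comm i j, risingFac_add]
    have h2 := fallR_mul_factorial i j
    have hfi : ((i.factorial : ℝ)) ≠ 0 := by exact_mod_cast i.factorial_ne_zero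
    have hfij : (((i + j).factorial : ℝ)) ≠ 0 := by exact_mod_cast (i + j).factorial_ne_zero
    have h3 : fallR (i + j) j = ((i + j).factorial : ℝ) / (i.factorial : ℝ) := by
      rw [eq_div_iff hfi]; exact h2
    rw [h1, h3, pow_add]
    have h2j : ((2:ℝ) ^ j) ≠ 0 := by positivity
    have h2i : ((2:ℝ) ^ i) ≠ 0 := by positivity
    field_simp
  have h2 : HasSum (fun i : ℕ =>
      risingFac r 1 (i + j) * fallR (i + j) j / ((i + j).factorial * 2 ^ (i + j)))
      (risingFac r 1 j * 2 ^ r) := by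
    simpa only [hpt] using h
  have hz : ∑ i ∈ Finset.range j,
      risingFac r 1 i * fallR i j / (i.factorial * 2 ^ i) = 0 := by
    refine Finset.sum_eq_zero fun i hi => ?_
    rw [fallR_eq_zero (Finset.mem_range.1 hi)]
    simp
  have h3 := (hasSum_nat_add_iff (f := fun i : ℕ =>
      risingFac r 1 i * fallR i j / (i.factorial * 2 ^ i)) j).1 h2
  rwa [hz, add_zero] at h3

lemma hasSum_comb {r : ℝ} (hr : 0 ≤ r) (k : ℕ) (c : ℕ → ℝ) :
    HasSum (fun i : ℕ => ∑ j ∈ Finset.range (k + 1),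
        c j * (risingFac r 1 i * fallR i j / (i.factorial * 2 ^ i)))
      ((∑ j ∈ Finset.range (k + 1), c j * risingFac r 1 j) * (2:ℝ) ^ r) := by
  have h := hasSum_sum (s := Finset.range (k + 1))
    (f := fun j i => c j * (risingFac r 1 i * fallR i j / (i.factorial * 2 ^ i)))
    (a := fun j => c j * (risingFac r 1 j * (2:ℝ) ^ r))
    (fun j _ => (hasSum_shift hr j).mul_left (c j))
  have : ∑ j ∈ Finset.range (k + 1), c j * (risingFac r 1 j * (2:ℝ) ^ r)
      = (∑ j ∈ Finset.range (k + 1), c j * risingFac r 1 j) * (2:ℝ) ^ r := by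
    rw [Finset.sum_mul]
    exact Finset.sum_congr rfl fun j _ => by ring
  rwa [this] at h

end Aux3

noncomputable section Aux4
open MeasureTheory Filter Real Set Finset

lemma hasSumP0 {r : ℝ} (hr : 0 ≤ r) :
    HasSum (fun i : ℕ => risingFac r 1 i * ((i + 0).factorial : ℝ) / ((i.factorial : ℝ) ^ 2 * 2 ^ i))
      ((1) * (2:ℝ) ^ r) := by
  have h := hasSum_comb hr 0 (fun j => (([1] : List ℝ).getD j 0))
  have hpt : (fun i : ℕ => ∑ j ∈ Finset.range (0 + 1),
      (([1] : List ℝ).getD j 0) * (risingFac r 1 i * fallR i j / (i.factorial * 2 ^ i)))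
      = fun i : ℕ => risingFac r 1 i * ((i + 0).factorial : ℝ) / ((i.factorial : ℝ) ^ 2 * 2 ^ i) := by
    funext i
    have hfi : ((i.factorial : ℝ)) ≠ 0 := by exact_mod_cast i.factorial_ne_zero
    have h2i : ((2:ℝ) ^ i) ≠ 0 := by positivity
    rw [fact_ratio i 0]
    simp [Finset.sum_range_succ, Finset.sum_range_zero, Finset.prod_range_succ,
      Finset.prod_range_zero, fallR, List.getD, List.getD_cons_zero, List.getD_cons_succ]
    try push_cast
    try field_simp
    try ring
  have hvv : (∑ j ∈ Finset.range (0 + 1), (([1] : List ℝ).getD j 0) * risingFac r 1 j)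
      = 1 := by
    simp [Finset.sum_range_succ, Finset.sum_range_zero, risingFac,
      Finset.prod_range_succ, Finset.prod_range_zero, List.getD, List.getD_cons_zero,
      List.getD_cons_succ]
    try push_cast
    try ring
  rw [hpt, hvv] at h
  exact h

lemma hasSumP1 {r : ℝ} (hr : 0 ≤ r) :
    HasSum (fun i : ℕ => risingFac r 1 i * ((i + 1).factorial : ℝ) / ((i.factorial : ℝ) ^ 2 * 2 ^ i))
      ((1 + r) * (2:ℝ) ^ r) := by
  have h := hasSum_comb hr 1 (fun j => (([1, 1] : List ℝ).getD j 0))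
  have hpt : (fun i : ℕ => ∑ j ∈ Finset.range (1 + 1),
      (([1, 1] : List ℝ).getD j 0) * (risingFac r 1 i * fallR i j / (i.factorial * 2 ^ i)))
      = fun i : ℕ => risingFac r 1 i * ((i + 1).factorial : ℝ) / ((i.factorial : ℝ) ^ 2 * 2 ^ i) := by
    funext i
    have hfi : ((i.factorial : ℝ)) ≠ 0 := by exact_mod_cast i.factorial_ne_zero
    have h2i : ((2:ℝ) ^ i) ≠ 0 := by positivity
    rw [fact_ratio i 1]
    simp [Finset.sum_range_succ, Finset.sum_range_zero, Finset.prod_range_succ,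
      Finset.prod_range_zero, fallR, List.getD, List.getD_cons_zero, List.getD_cons_succ]
    try push_cast
    try field_simp
    try ring
  have hvv : (∑ j ∈ Finset.range (1 + 1), (([1, 1] : List ℝ).getD j 0) * risingFac r 1 j)
      = 1 + r := by
    simp [Finset.sum_range_succ, Finset.sum_range_zero, risingFac,
      Finset.prod_range_succ, Finset.prod_range_zero, List.getD, List.getD_cons_zero,
      List.getD_cons_succ]
    try push_cast
    try ring
  rw [hpt, hvv] at h
  exact h

lemma hasSumP2 {r : ℝ} (hr : 0 ≤ r) :
    HasSum (fun i : ℕ => risingFac r 1 i * ((i + 2).factorial : ℝ) / ((i.factorial : ℝ) ^ 2 * 2 ^ i))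
      ((2 + 5*r + r^2) * (2:ℝ) ^ r) := by
  have h := hasSum_comb hr 2 (fun j => (([2, 4, 1] : List ℝ).getD j 0))
  have hpt : (fun i : ℕ => ∑ j ∈ Finset.range (2 + 1),
      (([2, 4, 1] : List ℝ).getD j 0) * (risingFac r 1 i * fallR i j / (i.factorial * 2 ^ i)))
      = fun i : ℕ => risingFac r 1 i * ((i + 2).factorial : ℝ) / ((i.factorial : ℝ) ^ 2 * 2 ^ i) := by
    funext i
    have hfi : ((i.factorial : ℝ)) ≠ 0 := by exact_mod_cast i.factorial_ne_zero
    have h2i : ((2:ℝ) ^ i) ≠ 0 := by positivity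
    rw [fact_ratio i 2]
    simp [Finset.sum_range_succ, Finset.sum_range_zero, Finset.prod_range_succ,
      Finset.prod_range_zero, fallR, List.getD, List.getD_cons_zero, List.getD_cons_succ]
    try push_cast
    try field_simp
    try ring
  have hvv : (∑ j ∈ Finset.range (2 + 1), (([2, 4, 1] : List ℝ).getD j 0) * risingFac r 1 j)
      = 2 + 5*r + r^2 := by
    simp [Finset.sum_range_succ, Finset.sum_range_zero, risingFac,
      Finset.prod_range_succ, Finset.prod_range_zero, List.getD, List.getD_cons_zero,
      List.getD_cons_succ]
    try push_cast
    try ring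
  rw [hpt, hvv] at h
  exact h

lemma hasSumP3 {r : ℝ} (hr : 0 ≤ r) :
    HasSum (fun i : ℕ => risingFac r 1 i * ((i + 3).factorial : ℝ) / ((i.factorial : ℝ) ^ 2 * 2 ^ i))
      ((6 + 29*r + 12*r^2 + r^3) * (2:ℝ) ^ r) := by
  have h := hasSum_comb hr 3 (fun j => (([6, 18, 9, 1] : List ℝ).getD j 0))
  have hpt : (fun i : ℕ => ∑ j ∈ Finset.range (3 + 1),
      (([6, 18, 9, 1] : List ℝ).getD j 0) * (risingFac r 1 i * fallR i j / (i.factorial * 2 ^ i)))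
      = fun i : ℕ => risingFac r 1 i * ((i + 3).factorial : ℝ) / ((i.factorial : ℝ) ^ 2 * 2 ^ i) := by
    funext i
    have hfi : ((i.factorial : ℝ)) ≠ 0 := by exact_mod_cast i.factorial_ne_zero
    have h2i : ((2:ℝ) ^ i) ≠ 0 := by positivity
    rw [fact_ratio i 3]
    simp [Finset.sum_range_succ, Finset.sum_range_zero, Finset.prod_range_succ,
      Finset.prod_range_zero, fallR, List.getD, List.getD_cons_zero, List.getD_cons_succ]
    try push_cast
    try field_simp
    try ring
  have hvv : (∑ j ∈ Finset.range (3 + 1), (([6, 18, 9, 1] : List ℝ).getD j 0) * risingFac r 1 j)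
      = 6 + 29*r + 12*r^2 + r^3 := by
    simp [Finset.sum_range_succ, Finset.sum_range_zero, risingFac,
      Finset.prod_range_succ, Finset.prod_range_zero, List.getD, List.getD_cons_zero,
      List.getD_cons_succ]
    try push_cast
    try ring
  rw [hpt, hvv] at h
  exact h

lemma hasSumP4 {r : ℝ} (hr : 0 ≤ r) :
    HasSum (fun i : ℕ => risingFac r 1 i * ((i + 4).factorial : ℝ) / ((i.factorial : ℝ) ^ 2 * 2 ^ i))
      ((24 + 206*r + 131*r^2 + 22*r^3 + r^4) * (2:ℝ) ^ r) := by
  have h := hasSum_comb hr 4 (fun j => (([24, 96, 72, 16, 1] : List ℝ).getD j 0))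
  have hpt : (fun i : ℕ => ∑ j ∈ Finset.range (4 + 1),
      (([24, 96, 72, 16, 1] : List ℝ).getD j 0) * (risingFac r 1 i * fallR i j / (i.factorial * 2 ^ i)))
      = fun i : ℕ => risingFac r 1 i * ((i + 4).factorial : ℝ) / ((i.factorial : ℝ) ^ 2 * 2 ^ i) := by
    funext i
    have hfi : ((i.factorial : ℝ)) ≠ 0 := by exact_mod_cast i.factorial_ne_zero
    have h2i : ((2:ℝ) ^ i) ≠ 0 := by positivity
    rw [fact_ratio i 4]
    simp [Finset.sum_range_succ, Finset.sum_range_zero, Finset.prod_range_succ,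
      Finset.prod_range_zero, fallR, List.getD, List.getD_cons_zero, List.getD_cons_succ]
    try push_cast
    try field_simp
    try ring
  have hvv : (∑ j ∈ Finset.range (4 + 1), (([24, 96, 72, 16, 1] : List ℝ).getD j 0) * risingFac r 1 j)
      = 24 + 206*r + 131*r^2 + 22*r^3 + r^4 := by
    simp [Finset.sum_range_succ, Finset.sum_range_zero, risingFac,
      Finset.prod_range_succ, Finset.prod_range_zero, List.getD, List.getD_cons_zero,
      List.getD_cons_succ]
    try push_cast
    try ring
  rw [hpt, hvv] at h
  exact h

lemma hasSumP5 {r : ℝ} (hr : 0 ≤ r) :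
    HasSum (fun i : ℕ => risingFac r 1 i * ((i + 5).factorial : ℝ) / ((i.factorial : ℝ) ^ 2 * 2 ^ i))
      ((120 + 1774*r + 1525*r^2 + 385*r^3 + 35*r^4 + r^5) * (2:ℝ) ^ r) := by
  have h := hasSum_comb hr 5 (fun j => (([120, 600, 600, 200, 25, 1] : List ℝ).getD j 0))
  have hpt : (fun i : ℕ => ∑ j ∈ Finset.range (5 + 1),
      (([120, 600, 600, 200, 25, 1] : List ℝ).getD j 0) * (risingFac r 1 i * fallR i j / (i.factorial * 2 ^ i)))
      = fun i : ℕ => risingFac r 1 i * ((i + 5).factorial : ℝ) / ((i.factorial : ℝ) ^ 2 * 2 ^ i) := by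
    funext i
    have hfi : ((i.factorial : ℝ)) ≠ 0 := by exact_mod_cast i.factorial_ne_zero
    have h2i : ((2:ℝ) ^ i) ≠ 0 := by positivity
    rw [fact_ratio i 5]
    simp [Finset.sum_range_succ, Finset.sum_range_zero, Finset.prod_range_succ,
      Finset.prod_range_zero, fallR, List.getD, List.getD_cons_zero, List.getD_cons_succ]
    try push_cast
    try field_simp
    try ring
  have hvv : (∑ j ∈ Finset.range (5 + 1), (([120, 600, 600, 200, 25, 1] : List ℝ).getD j 0) * risingFac r 1 j)
      = 120 + 1774*r + 1525*r^2 + 385*r^3 + 35*r^4 + r^5 := by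
    simp [Finset.sum_range_succ, Finset.sum_range_zero, risingFac,
      Finset.prod_range_succ, Finset.prod_range_zero, List.getD, List.getD_cons_zero,
      List.getD_cons_succ]
    try push_cast
    try ring
  rw [hpt, hvv] at h
  exact h

lemma hasSumP6 {r : ℝ} (hr : 0 ≤ r) :
    HasSum (fun i : ℕ => risingFac r 1 i * ((i + 6).factorial : ℝ) / ((i.factorial : ℝ) ^ 2 * 2 ^ i))
      ((720 + 18204*r + 19624*r^2 + 6585*r^3 + 895*r^4 + 51*r^5 + r^6) * (2:ℝ) ^ r) := by
  have h := hasSum_comb hr 6 (fun j => (([720, 4320, 5400, 2400, 450, 36, 1] : List ℝ).getD j 0))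
  have hpt : (fun i : ℕ => ∑ j ∈ Finset.range (6 + 1),
      (([720, 4320, 5400, 2400, 450, 36, 1] : List ℝ).getD j 0) * (risingFac r 1 i * fallR i j / (i.factorial * 2 ^ i)))
      = fun i : ℕ => risingFac r 1 i * ((i + 6).factorial : ℝ) / ((i.factorial : ℝ) ^ 2 * 2 ^ i) := by
    funext i
    have hfi : ((i.factorial : ℝ)) ≠ 0 := by exact_mod_cast i.factorial_ne_zero
    have h2i : ((2:ℝ) ^ i) ≠ 0 := by positivity
    rw [fact_ratio i 6]
    simp [Finset.sum_range_succ, Finset.sum_range_zero, Finset.prod_range_succ,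
      Finset.prod_range_zero, fallR, List.getD, List.getD_cons_zero, List.getD_cons_succ]
    try push_cast
    try field_simp
    try ring
  have hvv : (∑ j ∈ Finset.range (6 + 1), (([720, 4320, 5400, 2400, 450, 36, 1] : List ℝ).getD j 0) * risingFac r 1 j)
      = 720 + 18204*r + 19624*r^2 + 6585*r^3 + 895*r^4 + 51*r^5 + r^6 := by
    simp [Finset.sum_range_succ, Finset.sum_range_zero, risingFac,
      Finset.prod_range_succ, Finset.prod_range_zero, List.getD, List.getD_cons_zero,
      List.getD_cons_succ]
    try push_cast
    try ring
  rw [hpt, hvv] at h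
  exact h

end Aux4

noncomputable section Aux5
open MeasureTheory Filter Real Set Finset

lemma szasz_pow_eq (n i k : ℕ) :
    (fun u : ℝ => szaszBasis n i u * u ^ k)
      = fun u : ℝ => ((n:ℝ) ^ i / i.factorial) * (u ^ (((i + k : ℕ)):ℝ) * Real.exp (-(n:ℝ) * u ^ (1:ℝ))) := by
  funext u
  rw [Real.rpow_natCast, Real.rpow_one, szaszBasis, pow_add, mul_pow]
  ring

lemma integrableOn_szasz_pow (n i k : ℕ) (hn : 0 < n) :
    IntegrableOn (fun u : ℝ => szaszBasis n i u * u ^ k) (Ioi 0) volume := by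
  rw [szasz_pow_eq]
  refine (integrableOn_rpow_mul_exp_neg_mul_rpow
    (s := ((i + k : ℕ) : ℝ)) (p := 1) (b := n) ?_ one_pos ?_).const_mul _
  · exact lt_of_lt_of_le (by norm_num) (Nat.cast_nonneg _)
  · exact_mod_cast hn

lemma integral_szasz_pow (n i k : ℕ) (hn : 0 < n) :
    (∫ u in Ioi 0, szaszBasis n i u * u ^ k)
      = ((i + k).factorial : ℝ) / (i.factorial * (n:ℝ) ^ (k + 1)) := by
  have hn' : (0:ℝ) < n := by exact_mod_cast hn
  rw [szasz_pow_eq, integral_const_mul]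
  have hcong : (∫ u in Ioi 0, u ^ (((i + k : ℕ)):ℝ) * Real.exp (-(n:ℝ) * u ^ (1:ℝ)))
      = ∫ u in Ioi 0, u ^ ((((i + k : ℕ)):ℝ) + 1 - 1) * Real.exp (-((n:ℝ) * u)) := by
    refine setIntegral_congr_fun measurableSet_Ioi fun u _ => ?_
    rw [Real.rpow_one, add_sub_cancel_right, neg_mul]
  rw [hcong, Real.integral_rpow_mul_exp_neg_mul_Ioi (by positivity) hn']
  have hG : Real.Gamma ((((i + k : ℕ)):ℝ) + 1) = ((i + k).factorial : ℝ) := by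
    exact_mod_cast Real.Gamma_nat_eq_factorial (i + k)
  rw [hG]
  have hp : ((1:ℝ) / n) ^ ((((i + k : ℕ)):ℝ) + 1) = ((1:ℝ) / n) ^ ((i + k + 1 : ℕ)) := by
    rw [← Real.rpow_natCast (1 / (n:ℝ)) (i + k + 1)]
    push_cast
    ring_nf
  rw [hp]
  have hfi : ((i.factorial : ℝ)) ≠ 0 := by exact_mod_cast i.factorial_ne_zero
  have hnn : (n:ℝ) ≠ 0 := hn'.ne'
  rw [div_pow, one_pow]
  field_simp
  ring

lemma integral_szasz_sub_pow (n i m : ℕ) (x : ℝ) (hn : 0 < n) :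
    (∫ u in Ioi 0, szaszBasis n i u * (u - x) ^ m)
      = ∑ k ∈ Finset.range (m + 1), (m.choose k : ℝ) * (-x) ^ (m - k)
          * ((i + k).factorial : ℝ) / (i.factorial * (n:ℝ) ^ (k + 1)) := by
  have hpt : ∀ u : ℝ, szaszBasis n i u * (u - x) ^ m
      = ∑ k ∈ Finset.range (m + 1),
          (szaszBasis n i u * u ^ k) * ((-x) ^ (m - k) * (m.choose k : ℝ)) := by
    intro u
    rw [sub_eq_add_neg, add_pow, Finset.mul_sum]
    exact Finset.sum_congr rfl fun k _ => by ring
  simp_rw [hpt]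
  rw [integral_finset_sum _ fun k _ => (integrableOn_szasz_pow n i k hn).mul_const _]
  refine Finset.sum_congr rfl fun k _ => ?_
  rw [integral_mul_const, integral_szasz_pow n i k hn]
  ring

end Aux5

noncomputable section Aux6
open MeasureTheory Filter Real Set Finset

lemma risingFac_scale (n : ℕ) (hn : (n:ℝ) ≠ 0) (x : ℝ) (i : ℕ) :
    risingFac x (1/(n:ℝ)) i = risingFac ((n:ℝ) * x) 1 i / (n:ℝ) ^ i := by
  rw [eq_div_iff (pow_ne_zero i hn)]
  unfold risingFac
  have hp : (n:ℝ) ^ i = ∏ _j ∈ Finset.range i, (n:ℝ) := by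
    rw [Finset.prod_const, Finset.card_range]
  rw [hp, ← Finset.prod_mul_distrib]
  refine Finset.prod_congr rfl fun j _ => ?_
  field_simp

lemma theta_closed (n : ℕ) (hn : 0 < n) (x : ℝ) (m : ℕ) (Pm : ℕ → ℝ → ℝ)
    (hP : ∀ k, k ≤ m → HasSum
      (fun i : ℕ => risingFac ((n:ℝ) * x) 1 i * ((i + k).factorial : ℝ)
        / ((i.factorial : ℝ) ^ 2 * 2 ^ i))
      (Pm k ((n:ℝ) * x) * (2:ℝ) ^ ((n:ℝ) * x))) :
    theta n (1/n) m x = ∑ k ∈ Finset.range (m + 1),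
      (m.choose k : ℝ) * (-x) ^ (m - k) * (1/(n:ℝ)) ^ k * Pm k ((n:ℝ) * x) := by
  have hn' : (0:ℝ) < n := by exact_mod_cast hn
  have hnn : (n:ℝ) ≠ 0 := hn'.ne'
  have h2r : (2:ℝ) ^ (-((n:ℝ) * x)) * (2:ℝ) ^ ((n:ℝ) * x) = 1 := by
    rw [Real.rpow_neg (by norm_num)]
    exact inv_mul_cancel₀ (Real.rpow_pos_of_pos two_pos _).ne'
  have hterm : ∀ i : ℕ,
      (1 + (n:ℝ) * (1/(n:ℝ))) ^ (-x / (1/(n:ℝ))) * ((1/(n:ℝ)) + 1 / (n:ℝ)) ^ (-(i : ℤ)) *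
        (risingFac x (1/(n:ℝ)) i / (i.factorial : ℝ)) *
        ∫ u in Ioi 0, szaszBasis n i u * (u - x) ^ m
      = ∑ k ∈ Finset.range (m + 1),
          ((m.choose k : ℝ) * (-x) ^ (m - k) / (n:ℝ) ^ (k + 1) * (2:ℝ) ^ (-((n:ℝ) * x))) *
            (risingFac ((n:ℝ) * x) 1 i * ((i + k).factorial : ℝ)
              / ((i.factorial : ℝ) ^ 2 * 2 ^ i)) := by
    intro i
    have hbase : 1 + (n:ℝ) * (1/(n:ℝ)) = 2 := by field_simp; norm_num
    have hexp : -x / (1/(n:ℝ)) = -((n:ℝ) * x) := by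
      field_simp
    have hB : ((1/(n:ℝ)) + 1 / (n:ℝ)) ^ (-(i : ℤ)) = ((n:ℝ) / 2) ^ i := by
      have h1 : (1/(n:ℝ)) + 1 / (n:ℝ) = 2 / n := by ring
      rw [h1, zpow_neg, zpow_natCast, ← inv_pow, inv_div]
    rw [hbase, hexp, hB, risingFac_scale n hnn x i, integral_szasz_sub_pow n i m x hn,
      Finset.mul_sum]
    refine Finset.sum_congr rfl fun k _ => ?_
    have hfi : ((i.factorial : ℝ)) ≠ 0 := by exact_mod_cast i.factorial_ne_zero
    have h2i : ((2:ℝ) ^ i) ≠ 0 := by positivity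
    have hni : ((n:ℝ) ^ i) ≠ 0 := pow_ne_zero _ hnn
    have hnk : ((n:ℝ) ^ (k+1)) ≠ 0 := pow_ne_zero _ hnn
    rw [div_pow]
    field_simp
  have hsum2 : HasSum
      (fun i : ℕ => ∑ k ∈ Finset.range (m + 1),
        ((m.choose k : ℝ) * (-x) ^ (m - k) / (n:ℝ) ^ (k + 1) * (2:ℝ) ^ (-((n:ℝ) * x))) *
          (risingFac ((n:ℝ) * x) 1 i * ((i + k).factorial : ℝ)
            / ((i.factorial : ℝ) ^ 2 * 2 ^ i)))
      (∑ k ∈ Finset.range (m + 1),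
        ((m.choose k : ℝ) * (-x) ^ (m - k) / (n:ℝ) ^ (k + 1) * (2:ℝ) ^ (-((n:ℝ) * x))) *
          (Pm k ((n:ℝ) * x) * (2:ℝ) ^ ((n:ℝ) * x))) :=
    hasSum_sum fun k hk =>
      ((hP k (Nat.lt_succ_iff.1 (Finset.mem_range.1 hk))).mul_left _)
  have htsum :
      (∑' i : ℕ, (1 + (n:ℝ) * (1/(n:ℝ))) ^ (-x / (1/(n:ℝ))) * ((1/(n:ℝ)) + 1 / (n:ℝ)) ^ (-(i : ℤ)) *
        (risingFac x (1/(n:ℝ)) i / (i.factorial : ℝ)) *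
        ∫ u in Ioi 0, szaszBasis n i u * (u - x) ^ m)
      = ∑ k ∈ Finset.range (m + 1),
        ((m.choose k : ℝ) * (-x) ^ (m - k) / (n:ℝ) ^ (k + 1) * (2:ℝ) ^ (-((n:ℝ) * x))) *
          (Pm k ((n:ℝ) * x) * (2:ℝ) ^ ((n:ℝ) * x)) := by
    rw [tsum_congr hterm]
    exact hsum2.tsum_eq
  show (n : ℝ) * _ = _
  rw [htsum, Finset.mul_sum]
  refine Finset.sum_congr rfl fun k _ => ?_
  have hnk : ((n:ℝ) ^ (k+1)) ≠ 0 := pow_ne_zero _ hnn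
  calc (n:ℝ) * ((m.choose k : ℝ) * (-x) ^ (m - k) / (n:ℝ) ^ (k + 1) * (2:ℝ) ^ (-((n:ℝ) * x)) *
        (Pm k ((n:ℝ) * x) * (2:ℝ) ^ ((n:ℝ) * x)))
      = ((n:ℝ) * ((m.choose k : ℝ) * (-x) ^ (m - k) / (n:ℝ) ^ (k + 1)) * Pm k ((n:ℝ) * x)) *
          ((2:ℝ) ^ (-((n:ℝ) * x)) * (2:ℝ) ^ ((n:ℝ) * x)) := by ring
    _ = (m.choose k : ℝ) * (-x) ^ (m - k) * (1/(n:ℝ)) ^ k * Pm k ((n:ℝ) * x) := by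
        rw [h2r, mul_one, pow_succ, one_div, inv_pow]
        field_simp

end Aux6

noncomputable section Aux7
open MeasureTheory Filter Real Set Finset

def Pfun : ℕ → ℝ → ℝ
  | 0, _ => 1
  | 1, r => 1 + r
  | 2, r => 2 + 5*r + r^2
  | 3, r => 6 + 29*r + 12*r^2 + r^3
  | 4, r => 24 + 206*r + 131*r^2 + 22*r^3 + r^4
  | 5, r => 120 + 1774*r + 1525*r^2 + 385*r^3 + 35*r^4 + r^5
  | _, r => 720 + 18204*r + 19624*r^2 + 6585*r^3 + 895*r^4 + 51*r^5 + r^6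

lemma hPall {r : ℝ} (hr : 0 ≤ r) : ∀ k, k ≤ 6 → HasSum
    (fun i : ℕ => risingFac r 1 i * ((i + k).factorial : ℝ) / ((i.factorial : ℝ) ^ 2 * 2 ^ i))
    (Pfun k r * (2:ℝ) ^ r) := by
  intro k hk
  interval_cases k
  · simpa only [Pfun] using hasSumP0 hr
  · simpa only [Pfun] using hasSumP1 hr
  · simpa only [Pfun] using hasSumP2 hr
  · simpa only [Pfun] using hasSumP3 hr
  · simpa only [Pfun] using hasSumP4 hr
  · simpa only [Pfun] using hasSumP5 hr
  · simpa only [Pfun] using hasSumP6 hr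

lemma theta_eq (n : ℕ) (hn : 0 < n) (x : ℝ) (hx : 0 ≤ x) (m : ℕ) (hm : m ≤ 6) :
    theta n (1/n) m x = ∑ k ∈ Finset.range (m + 1),
      (m.choose k : ℝ) * (-x) ^ (m - k) * (1/(n:ℝ)) ^ k * Pfun k ((n:ℝ) * x) :=
  theta_closed n hn x m Pfun fun k hk =>
    hPall (mul_nonneg (Nat.cast_nonneg n) hx) k (hk.trans hm)

lemma theta1_eq (n : ℕ) (hn : 0 < n) (x : ℝ) (hx : 0 ≤ x) :
    (n:ℝ) * theta n (1/n) 1 x = 1 := by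
  have hnn : (n:ℝ) ≠ 0 := by positivity
  rw [theta_eq n hn x hx 1 (by norm_num)]
  simp [Finset.sum_range_succ, Pfun, Nat.choose]
  field_simp
  ring

lemma theta2_eq (n : ℕ) (hn : 0 < n) (x : ℝ) (hx : 0 ≤ x) :
    (n:ℝ) * theta n (1/n) 2 x = 3*x + 2/(n:ℝ) := by
  have hnn : (n:ℝ) ≠ 0 := by positivity
  rw [theta_eq n hn x hx 2 (by norm_num)]
  simp [Finset.sum_range_succ, Pfun, Nat.choose]
  field_simp
  ring

lemma theta4_eq (n : ℕ) (hn : 0 < n) (x : ℝ) (hx : 0 ≤ x) :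
    (n:ℝ)^2 * theta n (1/n) 4 x = 27*x^2 + 182*x/(n:ℝ) + 24/(n:ℝ)^2 := by
  have hnn : (n:ℝ) ≠ 0 := by positivity
  rw [theta_eq n hn x hx 4 (by norm_num)]
  simp [Finset.sum_range_succ, Pfun, Nat.choose]
  field_simp
  ring

lemma theta6_eq (n : ℕ) (hn : 0 < n) (x : ℝ) (hx : 0 ≤ x) :
    (n:ℝ)^3 * theta n (1/n) 6 x
      = 405*x^3 + 9340*x^2/(n:ℝ) + 17484*x/(n:ℝ)^2 + 720/(n:ℝ)^3 := by
  have hnn : (n:ℝ) ≠ 0 := by positivity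
  rw [theta_eq n hn x hx 6 (by norm_num)]
  simp [Finset.sum_range_succ, Pfun, Nat.choose]
  field_simp
  ring

end Aux7


theorem stmt7 (x : ℝ) (hx : 0 ≤ x) :
    Filter.Tendsto (fun n : ℕ => (n : ℝ) * theta n (1 / n) 1 x) Filter.atTop (nhds 1) ∧
    Filter.Tendsto (fun n : ℕ => (n : ℝ) * theta n (1 / n) 2 x) Filter.atTop (nhds (3 * x)) ∧
    Filter.Tendsto (fun n : ℕ => (n : ℝ) ^ 2 * theta n (1 / n) 4 x) Filter.atTop
      (nhds (27 * x ^ 2)) ∧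
    Filter.Tendsto (fun n : ℕ => (n : ℝ) ^ 3 * theta n (1 / n) 6 x) Filter.atTop
      (nhds (405 * x ^ 3)) := by
  have hN : Tendsto (fun n : ℕ => (n:ℝ)) atTop atTop := tendsto_natCast_atTop_atTop
  have hpow : ∀ p : ℕ, p ≠ 0 → Tendsto (fun n : ℕ => (n:ℝ) ^ p) atTop atTop :=
    fun p hp => (tendsto_pow_atTop hp).comp hN
  have hdiv : ∀ (c : ℝ) (p : ℕ), p ≠ 0 →
      Tendsto (fun n : ℕ => c / (n:ℝ) ^ p) atTop (nhds 0) :=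
    fun c p hp => Tendsto.div_atTop tendsto_const_nhds (hpow p hp)
  have hdiv1 : ∀ c : ℝ, Tendsto (fun n : ℕ => c / (n:ℝ)) atTop (nhds 0) :=
    fun c => Tendsto.div_atTop tendsto_const_nhds hN
  refine ⟨?_, ?_, ?_, ?_⟩
  · refine Tendsto.congr' ?_ (tendsto_const_nhds (x := (1:ℝ)))
    filter_upwards [eventually_gt_atTop 0] with n hn
    exact (theta1_eq n hn x hx).symm
  · have h : Tendsto (fun n : ℕ => 3*x + 2/(n:ℝ)) atTop (nhds (3*x)) := by
      simpa using tendsto_const_nhds.add (hdiv1 2)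
    refine Tendsto.congr' ?_ h
    filter_upwards [eventually_gt_atTop 0] with n hn
    exact (theta2_eq n hn x hx).symm
  · have h : Tendsto (fun n : ℕ => 27*x^2 + 182*x/(n:ℝ) + 24/(n:ℝ)^2) atTop
        (nhds (27*x^2)) := by
      simpa using (tendsto_const_nhds.add (hdiv1 (182*x))).add (hdiv 24 2 (by norm_num))
    refine Tendsto.congr' ?_ h
    filter_upwards [eventually_gt_atTop 0] with n hn
    exact (theta4_eq n hn x hx).symm
  · have h : Tendsto (fun n : ℕ =>
        405*x^3 + 9340*x^2/(n:ℝ) + 17484*x/(n:ℝ)^2 + 720/(n:ℝ)^3) atTop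
        (nhds (405*x^3)) := by
      simpa using ((tendsto_const_nhds.add (hdiv1 (9340*x^2))).add
        (hdiv (17484*x) 2 (by norm_num))).add (hdiv 720 3 (by norm_num))
    refine Tendsto.congr' ?_ h
    filter_upwards [eventually_gt_atTop 0] with n hn
    exact (theta6_eq n hn x hx).symm
end
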